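/- arXiv:2301.09036 — 3 statements merged into one kernel-verified Lean document; each statement's English description precedes it below -/
import Mathlib

section
/- Let G be a finite simple 3-regular bipartite graph. Then 16·M(G,4) = 2·N(P₂+3K₂) + 2·N(P₃+2K₂). -/
open SimpleGraph

/-- The number of `k`-matchings of a graph `G`: `k`-element sets of pairwise disjoint
edges of `G`, identified with the matching subgraphs of `G` having exactly `k` edges. -/
noncomputable def numMatchings {V : Type*} (G : SimpleGraph V) (k : ℕ) : ℕ :=
  Set.ncard {H : G.Subgraph | H.IsMatching ∧ H.edgeSet.ncard = k}

/-- The number of subgraphs of `G` isomorphic to the graph `X`. -/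
noncomputable def numSubgraphs {V W : Type*} (G : SimpleGraph V) (X : SimpleGraph W) : ℕ :=
  Set.ncard {H : G.Subgraph | Nonempty (H.coe ≃g X)}

open Finset

set_option linter.unusedSectionVars false
set_option linter.unusedVariables false
set_option maxHeartbeats 1000000

instance pathGraph_decAdj {n : ℕ} : DecidableRel (pathGraph n).Adj :=
  fun a b => decidable_of_iff _ pathGraph_adj.symm

instance sum_decAdj {α β : Type*} {G : SimpleGraph α} {H : SimpleGraph β} [DecidableRel G.Adj]
    [DecidableRel H.Adj] : DecidableRel (G ⊕g H).Adj := fun a b =>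
  match a, b with
  | .inl a, .inl b => inferInstanceAs (Decidable (G.Adj a b))
  | .inl _, .inr _ => isFalse (by simp)
  | .inr _, .inl _ => isFalse (by simp)
  | .inr a, .inr b => inferInstanceAs (Decidable (H.Adj a b))

namespace Stmt5


variable {V : Type*} [Fintype V] [DecidableEq V]

def touch (e f : Sym2 V) : Prop := ∃ v, v ∈ e ∧ v ∈ f

instance (e f : Sym2 V) : Decidable (touch e f) := by unfold touch; infer_instance

lemma touch_comm {e f : Sym2 V} : touch e f ↔ touch f e := by
  unfold touch; tauto

def mset (s : Finset (Sym2 V)) : Prop := ∀ e ∈ s, ∀ f ∈ s, e ≠ f → ¬ touch e f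

instance (s : Finset (Sym2 V)) : Decidable (mset s) := by unfold mset; infer_instance

lemma mset_unique {s : Finset (Sym2 V)} (hm : mset s) {g g' : Sym2 V} (hg : g ∈ s)
    (hg' : g' ∈ s) {v : V} (h : v ∈ g) (h' : v ∈ g') : g = g' := by
  by_contra hne
  exact hm g hg g' hg' hne ⟨v, h, h'⟩

lemma mset_subset {s t : Finset (Sym2 V)} (h : s ⊆ t) (hm : mset t) : mset s :=
  fun e he f hf hne => hm e (h he) f (h hf) hne

def shapeB (t : Finset (Sym2 V)) : Prop :=
  t.card = 5 ∧ ∃ e₁ e₂, e₁ ∈ t ∧ e₂ ∈ t ∧ e₁ ≠ e₂ ∧ touch e₁ e₂ ∧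
    mset (t.erase e₁) ∧ mset (t.erase e₂)

def shapeC (t : Finset (Sym2 V)) : Prop :=
  t.card = 5 ∧ ∃ e₁ e₂ e₃, e₁ ∈ t ∧ e₂ ∈ t ∧ e₃ ∈ t ∧ e₁ ≠ e₂ ∧ e₁ ≠ e₃ ∧ e₂ ≠ e₃ ∧
    touch e₁ e₂ ∧ touch e₂ e₃ ∧ ¬ touch e₁ e₃ ∧ mset (t.erase e₂) ∧
    (∀ g ∈ t, g ≠ e₁ → g ≠ e₂ → g ≠ e₃ → ¬ touch g e₂)

noncomputable instance (t : Finset (Sym2 V)) : Decidable (shapeB t) := Classical.dec _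
noncomputable instance (t : Finset (Sym2 V)) : Decidable (shapeC t) := Classical.dec _

variable (G : SimpleGraph V) [DecidableRel G.Adj]

def MA : Finset (Finset (Sym2 V)) :=
  univ.filter fun s => s ⊆ G.edgeFinset ∧ s.card = 4 ∧ mset s

noncomputable def MB : Finset (Finset (Sym2 V)) := univ.filter fun t => t ⊆ G.edgeFinset ∧ shapeB t

noncomputable def MC : Finset (Finset (Sym2 V)) := univ.filter fun t => t ⊆ G.edgeFinset ∧ shapeC t

lemma mem_MA {s : Finset (Sym2 V)} :
    s ∈ MA G ↔ s ⊆ G.edgeFinset ∧ s.card = 4 ∧ mset s := by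
  simp [MA]

lemma mem_MB {t : Finset (Sym2 V)} : t ∈ MB G ↔ t ⊆ G.edgeFinset ∧ shapeB t := by simp [MB]

lemma mem_MC {t : Finset (Sym2 V)} : t ∈ MC G ↔ t ⊆ G.edgeFinset ∧ shapeC t := by simp [MC]

lemma MB_disj_MC : Disjoint (MB G) (MC G) := by
  rw [Finset.disjoint_left]
  intro t htB htC
  obtain ⟨-, hc5, e₁, e₂, h1t, h2t, hne, htch, hm1, hm2⟩ := (mem_MB G).1 htB
  obtain ⟨-, -, f₁, f₂, f₃, hf1, hf2, hf3, h12, h13, h23, t12, t23, nt13, -, -⟩ :=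
    (mem_MC G).1 htC
  have key : ∀ g g', g ∈ t → g' ∈ t → g ≠ g' → touch g g' →
      (e₁ = g ∨ e₁ = g') ∧ (e₂ = g ∨ e₂ = g') := by
    intro g g' hg hg' hgg htc
    constructor
    · by_contra h
      push_neg at h
      exact hm1 g (mem_erase.2 ⟨fun hh => h.1 hh.symm, hg⟩)
        g' (mem_erase.2 ⟨fun hh => h.2 hh.symm, hg'⟩) hgg htc
    · by_contra h
      push_neg at h
      exact hm2 g (mem_erase.2 ⟨fun hh => h.1 hh.symm, hg⟩)
        g' (mem_erase.2 ⟨fun hh => h.2 hh.symm, hg'⟩) hgg htc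
  have k1 := key f₁ f₂ hf1 hf2 h12 t12
  have k2 := key f₂ f₃ hf2 hf3 h23 t23
  rcases k1 with ⟨h | h, h' | h'⟩ <;> rcases k2 with ⟨g | g, g' | g'⟩ <;> subst_vars <;>
    simp_all


lemma exists_rep {e : Sym2 V} (he : e ∈ G.edgeFinset) : ∃ x y, x ≠ y ∧ e = s(x, y) := by
  revert he
  induction e using Sym2.ind with
  | _ x y => exact fun he => ⟨x, y, (G.mem_edgeSet.1 (mem_edgeFinset.1 he)).ne, rfl⟩

lemma classify {s : Finset (Sym2 V)} {f e : Sym2 V} (hs : s ∈ MA G) (hf : f ∈ s)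
    (he : e ∈ G.edgeFinset) (hef : e ≠ f) (htc : touch e f) :
    s ∪ {e} ∈ MB G ∪ MC G := by
  obtain ⟨hsub, hc4, hm⟩ := (mem_MA G).1 hs
  have heS : e ∉ s := fun hes => hm e hes f hf hef htc
  have hins : s ∪ {e} = insert e s := by rw [union_comm, insert_eq]
  have hc5 : (s ∪ {e}).card = 5 := by rw [hins, card_insert_of_notMem heS, hc4]
  have herase : (s ∪ {e}).erase e = s := by rw [hins, erase_insert heS]
  have hsub5 : s ∪ {e} ⊆ G.edgeFinset := union_subset hsub (singleton_subset_iff.2 he)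
  have hmemss : ∀ g ∈ s, g ∈ s ∪ {e} := fun g hg => mem_union_left _ hg
  have hmeme : e ∈ s ∪ {e} := mem_union_right _ (mem_singleton_self e)
  by_cases hex : ∃ g ∈ s, g ≠ f ∧ touch e g
  · -- shapeC : path f - e - g
    obtain ⟨g, hg, hgf, htg⟩ := hex
    have hfg : f ≠ g := fun h => hgf h.symm
    have heg : e ≠ g := fun h => heS (h ▸ hg)
    refine mem_union_right _ ((mem_MC G).2 ⟨hsub5, hc5, f, e, g, hmemss f hf, hmeme,
      hmemss g hg, hef.symm, hfg, heg, touch_comm.1 htc, htg, hm f hf g hg hfg, ?_, ?_⟩)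
    · rw [herase]; exact hm
    · intro g' hg' hgf' hge' hgg' htc'
      have hg's : g' ∈ s := by
        rcases mem_union.1 hg' with h | h
        · exact h
        · exact absurd (mem_singleton.1 h) hge'
      obtain ⟨x, y, hxy, hrep⟩ := exists_rep G he
      rw [hrep] at htc htg htc'
      obtain ⟨v1, hv1e, hv1f⟩ := htc
      obtain ⟨v2, hv2e, hv2g⟩ := htg
      obtain ⟨v3, hv3g', hv3e⟩ := htc'
      rw [Sym2.mem_iff] at hv1e hv2e hv3e
      rcases hv1e with rfl | rfl <;> rcases hv2e with rfl | rfl <;> rcases hv3e with rfl | rfl <;>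
        first
          | exact hfg (mset_unique hm hf hg hv1f hv2g)
          | exact hgf' (mset_unique hm hg's hf hv3g' hv1f)
          | exact hgg' (mset_unique hm hg's hg hv3g' hv2g)
  · -- shapeB : path e - f
    push_neg at hex
    refine mem_union_left _ ((mem_MB G).2 ⟨hsub5, hc5, e, f, hmeme, hmemss f hf, hef, htc,
      ?_, ?_⟩)
    · rw [herase]; exact hm
    · have hef' : (s ∪ {e}).erase f = insert e (s.erase f) := by
        rw [hins, erase_insert_of_ne hef]
      rw [hef']
      intro g1 hg1 g2 hg2 hne12 htc12
      rcases mem_insert.1 hg1 with rfl | hg1s <;> rcases mem_insert.1 hg2 with rfl | hg2s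
      · exact hne12 rfl
      · exact hex g2 (mem_of_mem_erase hg2s) (ne_of_mem_erase hg2s) htc12
      · exact hex g1 (mem_of_mem_erase hg1s) (ne_of_mem_erase hg1s) (touch_comm.1 htc12)
      · exact hm g1 (mem_of_mem_erase hg1s) g2 (mem_of_mem_erase hg2s) hne12 htc12


noncomputable def QF : Finset ((Finset (Sym2 V) × Sym2 V) × Sym2 V) :=
  ((MA G ×ˢ G.edgeFinset) ×ˢ G.edgeFinset).filter fun x =>
    x.1.2 ∈ x.1.1 ∧ x.2 ≠ x.1.2 ∧ touch x.2 x.1.2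

lemma mem_QF {x : (Finset (Sym2 V) × Sym2 V) × Sym2 V} :
    x ∈ QF G ↔ x.1.1 ∈ MA G ∧ x.1.2 ∈ G.edgeFinset ∧ x.2 ∈ G.edgeFinset ∧
      x.1.2 ∈ x.1.1 ∧ x.2 ≠ x.1.2 ∧ touch x.2 x.1.2 := by
  simp only [QF, mem_filter, mem_product]
  tauto

/-- basic reconstruction facts for a triple in the fiber of `t`. -/
lemma fiber_basic {t : Finset (Sym2 V)} (hc5 : t.card = 5)
    {x : (Finset (Sym2 V) × Sym2 V) × Sym2 V} (hx : x ∈ QF G)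
    (hu : x.1.1 ∪ {x.2} = t) : x.2 ∈ t ∧ x.1.1 = t.erase x.2 := by
  obtain ⟨hsA, -, -, hfs, hef, htc⟩ := (mem_QF G).1 hx
  obtain ⟨-, -, hm⟩ := (mem_MA G).1 hsA
  have heS : x.2 ∉ x.1.1 := fun hes => hm x.2 hes x.1.2 hfs hef htc
  have hins : insert x.2 x.1.1 = t := by rw [← hu, union_comm, insert_eq]
  refine ⟨hins ▸ mem_insert_self _ _, ?_⟩
  rw [← hins, erase_insert heS]

lemma fiberB (hreg : G.IsRegularOfDegree 3) {t : Finset (Sym2 V)} (ht : t ∈ MB G) :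
    ((QF G).filter fun x => x.1.1 ∪ {x.2} = t).card = 2 := by
  obtain ⟨hsub, hc5, e₁, e₂, h1t, h2t, hne, htch, hm1, hm2⟩ := (mem_MB G).1 ht
  have hkey : (QF G).filter (fun x => x.1.1 ∪ {x.2} = t) =
      {((t.erase e₁, e₂), e₁), ((t.erase e₂, e₁), e₂)} := by
    ext x
    simp only [mem_filter, mem_insert, mem_singleton]
    constructor
    · rintro ⟨hx, hu⟩
      obtain ⟨het, hserase⟩ := fiber_basic G hc5 hx hu
      obtain ⟨hsA, -, -, hfs, hef, htc⟩ := (mem_QF G).1 hx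
      obtain ⟨-, -, hm⟩ := (mem_MA G).1 hsA
      have he12 : x.2 = e₁ ∨ x.2 = e₂ := by
        by_contra h
        push_neg at h
        exact hm e₁ (hserase ▸ mem_erase.2 ⟨fun hh => h.1 hh.symm, h1t⟩)
          e₂ (hserase ▸ mem_erase.2 ⟨fun hh => h.2 hh.symm, h2t⟩) hne htch
      rcases he12 with he | he
      · left
        have hf2 : x.1.2 = e₂ := by
          by_contra hf2
          refine hm2 e₁ (mem_erase.2 ⟨hne, h1t⟩) x.1.2
            (mem_erase.2 ⟨hf2, ?_⟩) (fun hh => hef (he.trans hh)) (he ▸ htc)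
          exact mem_of_mem_erase (hserase ▸ hfs)
        have : x = ((x.1.1, x.1.2), x.2) := rfl
        rw [this, hserase, he, hf2]
      · right
        have hf1 : x.1.2 = e₁ := by
          by_contra hf1
          refine hm1 e₂ (mem_erase.2 ⟨fun h => hne h.symm, h2t⟩) x.1.2
            (mem_erase.2 ⟨hf1, ?_⟩) (fun hh => hef (he.trans hh)) (he ▸ htc)
          exact mem_of_mem_erase (hserase ▸ hfs)
        have : x = ((x.1.1, x.1.2), x.2) := rfl
        rw [this, hserase, he, hf1]
    · have hA1 : t.erase e₁ ∈ MA G := (mem_MA G).2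
        ⟨(erase_subset _ _).trans hsub, by rw [card_erase_of_mem h1t, hc5], hm1⟩
      have hA2 : t.erase e₂ ∈ MA G := (mem_MA G).2
        ⟨(erase_subset _ _).trans hsub, by rw [card_erase_of_mem h2t, hc5], hm2⟩
      rintro (rfl | rfl)
      · refine ⟨(mem_QF G).2 ⟨hA1, hsub h2t, hsub h1t, mem_erase.2 ⟨hne.symm, h2t⟩,
          hne, htch⟩, ?_⟩
        rw [union_comm, ← insert_eq, insert_erase h1t]
      · refine ⟨(mem_QF G).2 ⟨hA2, hsub h1t, hsub h2t, mem_erase.2 ⟨hne, h1t⟩,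
          hne.symm, touch_comm.1 htch⟩, ?_⟩
        rw [union_comm, ← insert_eq, insert_erase h2t]
  rw [hkey]
  rw [card_insert_of_notMem (by simp [hne]), card_singleton]

lemma fiberC (hreg : G.IsRegularOfDegree 3) {t : Finset (Sym2 V)} (ht : t ∈ MC G) :
    ((QF G).filter fun x => x.1.1 ∪ {x.2} = t).card = 2 := by
  obtain ⟨hsub, hc5, e₁, e₂, e₃, h1t, h2t, h3t, h12, h13, h23, t12, t23, nt13, hm2, hall⟩ :=
    (mem_MC G).1 ht
  have hA2 : t.erase e₂ ∈ MA G := (mem_MA G).2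
    ⟨(erase_subset _ _).trans hsub, by rw [card_erase_of_mem h2t, hc5], hm2⟩
  have hkey : (QF G).filter (fun x => x.1.1 ∪ {x.2} = t) =
      {((t.erase e₂, e₁), e₂), ((t.erase e₂, e₃), e₂)} := by
    ext x
    simp only [mem_filter, mem_insert, mem_singleton]
    constructor
    · rintro ⟨hx, hu⟩
      obtain ⟨het, hserase⟩ := fiber_basic G hc5 hx hu
      obtain ⟨hsA, -, -, hfs, hef, htc⟩ := (mem_QF G).1 hx
      obtain ⟨-, -, hm⟩ := (mem_MA G).1 hsA
      have he2 : x.2 = e₂ := by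
        by_contra hne2
        have h2s : e₂ ∈ x.1.1 := hserase ▸ mem_erase.2 ⟨fun h => hne2 h.symm, h2t⟩
        have h13' : e₁ ∈ x.1.1 ∨ e₃ ∈ x.1.1 := by
          rcases eq_or_ne x.2 e₁ with rfl | hne1
          · exact Or.inr (hserase ▸ mem_erase.2 ⟨fun h => h13 (h.symm), h3t⟩)
          · exact Or.inl (hserase ▸ mem_erase.2 ⟨fun h => hne1 h.symm, h1t⟩)
        rcases h13' with h | h
        · exact hm e₁ h e₂ h2s h12 t12
        · exact hm e₃ h e₂ h2s (fun hh => h23 hh.symm) (touch_comm.1 t23)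
      have hf13 : x.1.2 = e₁ ∨ x.1.2 = e₃ := by
        by_contra h
        push_neg at h
        have hfs' : x.1.2 ∈ t.erase e₂ := he2 ▸ (hserase ▸ hfs)
        have hft : x.1.2 ∈ t := mem_of_mem_erase hfs'
        have hfne2 : x.1.2 ≠ e₂ := ne_of_mem_erase hfs'
        exact hall x.1.2 hft h.1 hfne2 h.2 (touch_comm.1 (he2 ▸ htc))
      have hxx : x = ((x.1.1, x.1.2), x.2) := rfl
      rcases hf13 with hf | hf
      · left; rw [hxx, hserase, he2, hf]
      · right; rw [hxx, hserase, he2, hf]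
    · rintro (rfl | rfl)
      · refine ⟨(mem_QF G).2 ⟨hA2, hsub h1t, hsub h2t, mem_erase.2 ⟨h12, h1t⟩,
          fun h => h12 h.symm, touch_comm.1 t12⟩, ?_⟩
        rw [union_comm, ← insert_eq, insert_erase h2t]
      · refine ⟨(mem_QF G).2 ⟨hA2, hsub h3t, hsub h2t, mem_erase.2 ⟨fun h => h23 h.symm, h3t⟩,
          h23, t23⟩, ?_⟩
        rw [union_comm, ← insert_eq, insert_erase h2t]
  rw [hkey]
  rw [card_insert_of_notMem (by simp [h13]), card_singleton]

/-- every edge of a 3-regular graph touches exactly 4 other edges. -/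
lemma nbr4 (hreg : G.IsRegularOfDegree 3) {f : Sym2 V} (hf : f ∈ G.edgeFinset) :
    (G.edgeFinset.filter (fun e => e ≠ f ∧ touch e f)).card = 4 := by
  obtain ⟨u, v, huv, rfl⟩ := exists_rep G hf
  have hadj : G.Adj u v := G.mem_edgeSet.1 (mem_edgeFinset.1 hf)
  have key : G.edgeFinset.filter (fun e => e ≠ s(u, v) ∧ touch e s(u, v)) =
      (G.incidenceFinset u ∪ G.incidenceFinset v).erase s(u, v) := by
    ext e
    have : ∀ w, w ∈ e → (w ∈ s(u,v) ↔ (w = u ∨ w = v)) := fun w _ => Sym2.mem_iff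
    simp only [mem_filter, mem_erase, mem_union, mem_incidenceFinset, mem_incidenceSet,
      touch, Sym2.mem_iff, mem_edgeFinset]
    constructor
    · rintro ⟨he, hne, w, hw, (rfl | rfl)⟩
      · exact ⟨hne, Or.inl ⟨he, hw⟩⟩
      · exact ⟨hne, Or.inr ⟨he, hw⟩⟩
    · rintro ⟨hne, (⟨he, hw⟩ | ⟨he, hw⟩)⟩
      · exact ⟨he, hne, u, hw, Or.inl rfl⟩
      · exact ⟨he, hne, v, hw, Or.inr rfl⟩
  rw [key]
  have hmem : s(u, v) ∈ G.incidenceFinset u ∪ G.incidenceFinset v := by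
    rw [mem_union, mem_incidenceFinset]
    exact Or.inl ⟨G.mem_edgeSet.2 hadj, Sym2.mem_mk_left u v⟩
  rw [card_erase_of_mem hmem]
  have hinter : G.incidenceFinset u ∩ G.incidenceFinset v = {s(u, v)} := by
    have := G.incidenceSet_inter_incidenceSet_of_adj hadj
    ext e
    simp only [mem_inter, mem_incidenceFinset, mem_singleton]
    rw [← Set.mem_inter_iff, this, Set.mem_singleton_iff]
  have hcu := card_union_add_card_inter (G.incidenceFinset u) (G.incidenceFinset v)
  rw [hinter, card_singleton, G.card_incidenceFinset_eq_degree, G.card_incidenceFinset_eq_degree,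
    hreg u, hreg v] at hcu
  omega


lemma count1 (hreg : G.IsRegularOfDegree 3) : (QF G).card = 16 * (MA G).card := by
  rw [Finset.card_eq_sum_card_fiberwise (f := Prod.fst) (t := MA G ×ˢ G.edgeFinset)
    (fun x hx => mem_product.2 ⟨((mem_QF G).1 hx).1, ((mem_QF G).1 hx).2.1⟩)]
  have step : ∀ y ∈ MA G ×ˢ G.edgeFinset,
      ((QF G).filter fun x => x.1 = y).card = if y.2 ∈ y.1 then 4 else 0 := by
    intro y hy
    obtain ⟨hyA, hyE⟩ := mem_product.1 hy
    by_cases hmem : y.2 ∈ y.1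
    · rw [if_pos hmem]
      have himg : (QF G).filter (fun x => x.1 = y) =
          (G.edgeFinset.filter fun e => e ≠ y.2 ∧ touch e y.2).image fun e => (y, e) := by
        ext x
        simp only [mem_filter, mem_image]
        constructor
        · rintro ⟨hx, h1⟩
          obtain ⟨-, -, he, -, hne, htc⟩ := (mem_QF G).1 hx
          exact ⟨x.2, ⟨he, h1 ▸ hne, h1 ▸ htc⟩, by rw [← h1]⟩
        · rintro ⟨e, ⟨he, hne, htc⟩, rfl⟩
          exact ⟨(mem_QF G).2 ⟨hyA, hyE, he, hmem, hne, htc⟩, rfl⟩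
      rw [himg, card_image_of_injective _ (fun a b h => by
        simpa using congrArg Prod.snd h)]
      exact nbr4 G hreg hyE
    · rw [if_neg hmem, card_eq_zero, filter_eq_empty_iff]
      intro x hx h1
      obtain ⟨-, -, -, hfs, -, -⟩ := (mem_QF G).1 hx
      exact hmem (h1 ▸ hfs)
  rw [Finset.sum_congr rfl step, Finset.sum_product]
  have inner : ∀ s ∈ MA G, (∑ f ∈ G.edgeFinset, if f ∈ s then 4 else 0) = 16 := by
    intro s hsA
    obtain ⟨hsub, hc4, -⟩ := (mem_MA G).1 hsA
    rw [← Finset.sum_filter, filter_mem_eq_inter, inter_eq_right.2 hsub, sum_const, hc4]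
    rfl
  rw [Finset.sum_congr rfl inner, sum_const, smul_eq_mul, mul_comm]

lemma count2 (hreg : G.IsRegularOfDegree 3) :
    (QF G).card = 2 * (MB G).card + 2 * (MC G).card := by
  have hcl : ∀ x ∈ QF G, x.1.1 ∪ {x.2} ∈ MB G ∪ MC G := by
    intro x hx
    obtain ⟨h1, h2, h3, h4, h5, h6⟩ := (mem_QF G).1 hx
    exact classify G h1 h4 h3 h5 h6
  rw [Finset.card_eq_sum_card_fiberwise hcl, Finset.sum_union (MB_disj_MC G),
    Finset.sum_congr rfl (fun t ht => fiberB G hreg ht),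
    Finset.sum_congr rfl (fun t ht => fiberC G hreg ht), sum_const, sum_const,
    smul_eq_mul, smul_eq_mul, mul_comm (MB G).card 2, mul_comm (MC G).card 2]

lemma core_count (hreg : G.IsRegularOfDegree 3) :
    16 * (MA G).card = 2 * (MB G).card + 2 * (MC G).card := by
  rw [← count1 G hreg, count2 G hreg]



/-- the subgraph of `G` spanned by a finite set of edges. -/
def ofEdges (t : Finset (Sym2 V)) : G.Subgraph where
  verts := {v | ∃ e ∈ t, e ∈ G.edgeSet ∧ v ∈ e}
  Adj x y := s(x, y) ∈ t ∧ G.Adj x y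
  adj_sub h := h.2
  edge_vert h := ⟨_, h.1, G.mem_edgeSet.2 h.2, Sym2.mem_mk_left _ _⟩
  symm := ⟨fun x y h => ⟨Sym2.eq_swap ▸ h.1, h.2.symm⟩⟩

variable {t : Finset (Sym2 V)}

lemma ofEdges_adj (ht : t ⊆ G.edgeFinset) {x y : V} :
    (ofEdges G t).Adj x y ↔ s(x, y) ∈ t :=
  ⟨fun h => h.1, fun h => ⟨h, G.mem_edgeSet.1 (mem_edgeFinset.1 (ht h))⟩⟩

lemma ofEdges_verts (ht : t ⊆ G.edgeFinset) :
    (ofEdges G t).verts = {v | ∃ e ∈ t, v ∈ e} := by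
  ext v
  constructor
  · rintro ⟨e, he, -, hv⟩; exact ⟨e, he, hv⟩
  · rintro ⟨e, he, hv⟩; exact ⟨e, he, mem_edgeFinset.1 (ht he), hv⟩

lemma ofEdges_edgeSet (ht : t ⊆ G.edgeFinset) : (ofEdges G t).edgeSet = ↑t := by
  ext e
  induction e using Sym2.ind with
  | _ x y => rw [Subgraph.mem_edgeSet, ofEdges_adj G ht]; rfl

/-- a subgraph's coercion is isomorphic to `X` iff there is an injection of the vertex set of
`X` realizing it. -/
lemma iso_iff {I : Type*} (X : SimpleGraph I) (K : G.Subgraph) :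
    Nonempty (K.coe ≃g X) ↔ ∃ φ : I → V, Function.Injective φ ∧ Set.range φ = K.verts ∧
      ∀ i j, (K.Adj (φ i) (φ j) ↔ X.Adj i j) := by
  constructor
  · rintro ⟨σ⟩
    refine ⟨fun i => (σ.symm i : V), fun i j h => σ.symm.injective (Subtype.val_injective h),
      ?_, fun i j => ?_⟩
    · ext v
      constructor
      · rintro ⟨i, rfl⟩; exact (σ.symm i).2
      · intro hv; exact ⟨σ ⟨v, hv⟩, by simp⟩
    · rw [← σ.symm.map_adj_iff]
      exact Iff.rfl
  · rintro ⟨φ, hinj, hrange, hadj⟩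
    let equiv : ↥K.verts ≃ I := ((Equiv.ofInjective φ hinj).trans (Equiv.setCongr hrange)).symm
    have hval : ∀ i : I, ((equiv.symm i : ↥K.verts) : V) = φ i := fun i => rfl
    have hval' : ∀ a : ↥K.verts, (a : V) = φ (equiv a) := fun a => by
      rw [← hval (equiv a), Equiv.symm_apply_apply]
    refine ⟨⟨equiv, @fun a b => ?_⟩⟩
    rw [← hadj (equiv a) (equiv b), ← hval' a, ← hval' b]
    exact Iff.rfl


/-- generic: edge sets obtained by injectively embedding a pattern `p` on `Fin n`. -/
def pimg {n : ℕ} (p : Finset (Sym2 (Fin n))) (f : Fin n → V) : Finset (Sym2 V) :=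
  p.image (Sym2.map f)

def vshape {n : ℕ} (p : Finset (Sym2 (Fin n))) (t : Finset (Sym2 V)) : Prop :=
  ∃ f : Fin n → V, Function.Injective f ∧ t = pimg p f

variable {n : ℕ} {p : Finset (Sym2 (Fin n))} {f : Fin n → V}

lemma mem_pimg (hinj : Function.Injective f) {z : Sym2 (Fin n)} :
    Sym2.map f z ∈ pimg p f ↔ z ∈ p := by
  constructor
  · intro h
    obtain ⟨z', hz', hzz⟩ := Finset.mem_image.1 h
    rwa [← Sym2.map.injective hinj hzz]
  · exact fun h => Finset.mem_image_of_mem _ h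

lemma pimg_verts (ht : pimg p f ⊆ G.edgeFinset) (hcov : ∀ i : Fin n, ∃ e ∈ p, i ∈ e) :
    (ofEdges G (pimg p f)).verts = Set.range f := by
  rw [ofEdges_verts G ht]
  ext v
  constructor
  · rintro ⟨e, he, hv⟩
    obtain ⟨z, hz, rfl⟩ := Finset.mem_image.1 he
    obtain ⟨w, -, rfl⟩ := Sym2.mem_map.1 hv
    exact ⟨w, rfl⟩
  · rintro ⟨i, rfl⟩
    obtain ⟨e, he, hie⟩ := hcov i
    exact ⟨Sym2.map f e, Finset.mem_image_of_mem _ he, Sym2.mem_map.2 ⟨i, hie, rfl⟩⟩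

/-- generic construction of an isomorphism from a pattern realization. -/
lemma pimg_iso {I : Type*} (X : SimpleGraph I) (ψ : Fin n ≃ I)
    (hD : ∀ i j : Fin n, X.Adj (ψ i) (ψ j) ↔ s(i, j) ∈ p)
    (hcov : ∀ i : Fin n, ∃ e ∈ p, i ∈ e)
    (hinj : Function.Injective f) (ht : pimg p f ⊆ G.edgeFinset) :
    Nonempty ((ofEdges G (pimg p f)).coe ≃g X) := by
  rw [iso_iff]
  refine ⟨f ∘ ψ.symm, hinj.comp ψ.symm.injective, ?_, fun i j => ?_⟩
  · rw [Set.range_comp, Set.range_eq_univ.2 ψ.symm.surjective, Set.image_univ,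
      pimg_verts G ht hcov]
  · obtain ⟨i', rfl⟩ := ψ.surjective i
    obtain ⟨j', rfl⟩ := ψ.surjective j
    rw [hD i' j']
    have h1 : (f ∘ ψ.symm) (ψ i') = f i' := by simp
    have h2 : (f ∘ ψ.symm) (ψ j') = f j' := by simp
    rw [h1, h2, ofEdges_adj G ht, ← Sym2.map_pair_eq, mem_pimg hinj]

/-- generic extraction of a pattern realization from an isomorphism. -/
lemma pimg_extract {I : Type*} (X : SimpleGraph I) (ψ : Fin n ≃ I)
    (hD : ∀ i j : Fin n, X.Adj (ψ i) (ψ j) ↔ s(i, j) ∈ p)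
    (hcov : ∀ i : Fin n, ∃ e ∈ p, i ∈ e)
    {K : G.Subgraph} (h : Nonempty (K.coe ≃g X)) :
    ∃ f : Fin n → V, Function.Injective f ∧ pimg p f ⊆ G.edgeFinset ∧
      K = ofEdges G (pimg p f) := by
  obtain ⟨φ, hinj, hrange, hadj⟩ := (iso_iff G X K).1 h
  set f : Fin n → V := φ ∘ ψ with hf
  have hKadj : ∀ i j : Fin n, K.Adj (f i) (f j) ↔ s(i, j) ∈ p := fun i j =>
    (hadj (ψ i) (ψ j)).trans (hD i j)
  have hfinj : Function.Injective f := hinj.comp ψ.injective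
  have hsub : pimg p f ⊆ G.edgeFinset := by
    intro e he
    obtain ⟨z, hz, rfl⟩ := Finset.mem_image.1 he
    revert hz
    induction z using Sym2.ind with
    | _ i j =>
      intro hz
      rw [Sym2.map_pair_eq, mem_edgeFinset, G.mem_edgeSet]
      exact K.adj_sub ((hKadj i j).2 hz)
  have hrangef : Set.range f = Set.range φ := by
    rw [hf, Set.range_comp, Set.range_eq_univ.2 ψ.surjective, Set.image_univ]
  refine ⟨f, hfinj, hsub, Subgraph.ext ?_ ?_⟩
  · rw [pimg_verts G hsub hcov, hrangef, hrange]
  · funext x y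
    rw [eq_iff_iff]
    constructor
    · intro hK
      have hx : x ∈ Set.range f := by
        rw [hrangef, hrange]; exact K.edge_vert hK
      have hy : y ∈ Set.range f := by
        rw [hrangef, hrange]; exact K.edge_vert hK.symm
      obtain ⟨i, rfl⟩ := hx
      obtain ⟨j, rfl⟩ := hy
      rw [ofEdges_adj G hsub, ← Sym2.map_pair_eq, mem_pimg hfinj]
      exact (hKadj i j).1 hK
    · intro hO
      rw [ofEdges_adj G hsub] at hO
      obtain ⟨z, hz, hze⟩ := Finset.mem_image.1 hO
      revert hz
      induction z using Sym2.ind with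
      | _ i j =>
        intro hz
        rw [Sym2.map_pair_eq, Sym2.eq_iff] at hze
        rcases hze with ⟨rfl, rfl⟩ | ⟨rfl, rfl⟩
        · exact (hKadj i j).2 hz
        · exact ((hKadj i j).2 hz).symm


noncomputable def MV (p : Finset (Sym2 (Fin n))) : Finset (Finset (Sym2 V)) :=
  @Finset.filter _ (fun t => t ⊆ G.edgeFinset ∧ vshape p t) (fun _ => Classical.dec _) univ

lemma mem_MV {p : Finset (Sym2 (Fin n))} {t : Finset (Sym2 V)} :
    t ∈ MV G p ↔ t ⊆ G.edgeFinset ∧ vshape p t := by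
  simp [MV]

lemma ofEdges_injOn {S : Set (Finset (Sym2 V))} (hS : ∀ t ∈ S, t ⊆ G.edgeFinset) :
    Set.InjOn (ofEdges G) S := by
  intro t1 h1 t2 h2 heq
  have := congrArg Subgraph.edgeSet heq
  rw [ofEdges_edgeSet G (hS t1 h1), ofEdges_edgeSet G (hS t2 h2)] at this
  exact Finset.coe_injective this

lemma numSubgraphs_eq {I : Type*} (X : SimpleGraph I) (ψ : Fin n ≃ I)
    {p : Finset (Sym2 (Fin n))}
    (hD : ∀ i j : Fin n, X.Adj (ψ i) (ψ j) ↔ s(i, j) ∈ p)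
    (hcov : ∀ i : Fin n, ∃ e ∈ p, i ∈ e) :
    numSubgraphs G X = (MV G p).card := by
  have hset : {H : G.Subgraph | Nonempty (H.coe ≃g X)} = ofEdges G '' ↑(MV G p) := by
    ext K
    constructor
    · intro hK
      obtain ⟨f, hfinj, hsub, rfl⟩ := pimg_extract G X ψ hD hcov hK
      exact ⟨pimg p f, (mem_MV G).2 ⟨hsub, f, hfinj, rfl⟩, rfl⟩
    · rintro ⟨t, ht, rfl⟩
      obtain ⟨hsub, f, hfinj, rfl⟩ := (mem_MV G).1 ht
      exact pimg_iso G X ψ hD hcov hfinj hsub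
  rw [numSubgraphs, hset,
    Set.ncard_image_of_injOn (ofEdges_injOn G (S := ↑(MV G p)) (fun t ht => ((mem_MV G).1 ht).1)),
    Set.ncard_coe_finset]

lemma numMatchings_eq : numMatchings G 4 = (MA G).card := by
  have hset : {H : G.Subgraph | H.IsMatching ∧ H.edgeSet.ncard = 4} =
      ofEdges G '' ↑(MA G) := by
    ext H
    constructor
    · rintro ⟨hmat, hcard⟩
      have hfin : H.edgeSet.Finite := Set.toFinite _
      refine ⟨hfin.toFinset, (mem_MA G).2 ⟨?_, ?_, ?_⟩, ?_⟩
      · intro e he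
        rw [Set.Finite.mem_toFinset] at he
        exact mem_edgeFinset.2 (H.edgeSet_subset he)
      · rw [← Set.ncard_eq_toFinset_card _ hfin, hcard]
      · intro e he g hg hne ⟨v, hve, hvg⟩
        rw [Set.Finite.mem_toFinset] at he hg
        obtain ⟨x, rfl⟩ := (Sym2.mem_iff_exists).1 hve
        obtain ⟨y, rfl⟩ := (Sym2.mem_iff_exists).1 hvg
        have h1 : H.Adj v x := Subgraph.mem_edgeSet.1 he
        have h2 : H.Adj v y := Subgraph.mem_edgeSet.1 hg
        obtain ⟨w, -, huniq⟩ := hmat (H.edge_vert h1)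
        exact hne (by rw [huniq x h1, huniq y h2])
      · refine (Subgraph.ext ?_ ?_).symm
        · ext v
          constructor
          · intro hv
            obtain ⟨w, hw, -⟩ := hmat hv
            exact ⟨s(v, w), Set.Finite.mem_toFinset _ |>.2 (Subgraph.mem_edgeSet.2 hw),
              H.edgeSet_subset (Subgraph.mem_edgeSet.2 hw), Sym2.mem_mk_left _ _⟩
          · rintro ⟨e, he, -, hv⟩
            rw [Set.Finite.mem_toFinset] at he
            obtain ⟨x, rfl⟩ := (Sym2.mem_iff_exists).1 hv
            exact H.edge_vert (Subgraph.mem_edgeSet.1 he)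
        · funext x y
          rw [eq_iff_iff]
          constructor
          · intro h
            exact ⟨Set.Finite.mem_toFinset _ |>.2 (Subgraph.mem_edgeSet.2 h), H.adj_sub h⟩
          · rintro ⟨h, -⟩
            rw [Set.Finite.mem_toFinset] at h
            exact Subgraph.mem_edgeSet.1 h
    · rintro ⟨t, ht, rfl⟩
      obtain ⟨hsub, hc4, hm⟩ := (mem_MA G).1 ht
      constructor
      · intro v hv
        obtain ⟨e, het, heE, hve⟩ := hv
        obtain ⟨w, rfl⟩ := (Sym2.mem_iff_exists).1 hve
        refine ⟨w, (ofEdges_adj G hsub).2 het, ?_⟩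
        intro y hy
        rw [ofEdges_adj G hsub] at hy
        have := mset_unique hm hy het (Sym2.mem_mk_left _ _) (Sym2.mem_mk_left _ _)
        exact Sym2.congr_right.1 this
      · rw [ofEdges_edgeSet G hsub, Set.ncard_coe_finset, hc4]
  rw [numMatchings, hset,
    Set.ncard_image_of_injOn (ofEdges_injOn G (S := ↑(MA G)) (fun t ht => ((mem_MA G).1 ht).1)),
    Set.ncard_coe_finset]



abbrev I1 := ((Fin 3 ⊕ Fin 2) ⊕ Fin 2) ⊕ Fin 2
abbrev I2 := (Fin 4 ⊕ Fin 2) ⊕ Fin 2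

abbrev X1 : SimpleGraph I1 := pathGraph 3 ⊕g pathGraph 2 ⊕g pathGraph 2 ⊕g pathGraph 2
abbrev X2 : SimpleGraph I2 := pathGraph 4 ⊕g pathGraph 2 ⊕g pathGraph 2

def psi1 : Fin 9 ≃ I1 where
  toFun := ![.inl (.inl (.inl 0)), .inl (.inl (.inl 1)), .inl (.inl (.inl 2)),
    .inl (.inl (.inr 0)), .inl (.inl (.inr 1)), .inl (.inr 0), .inl (.inr 1), .inr 0, .inr 1]
  invFun := fun i => match i with
    | .inl (.inl (.inl j)) => ![0, 1, 2] j
    | .inl (.inl (.inr j)) => ![3, 4] j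
    | .inl (.inr j) => ![5, 6] j
    | .inr j => ![7, 8] j
  left_inv := by decide
  right_inv := by decide

def psi2 : Fin 8 ≃ I2 where
  toFun := ![.inl (.inl 0), .inl (.inl 1), .inl (.inl 2), .inl (.inl 3),
    .inl (.inr 0), .inl (.inr 1), .inr 0, .inr 1]
  invFun := fun i => match i with
    | .inl (.inl j) => ![0, 1, 2, 3] j
    | .inl (.inr j) => ![4, 5] j
    | .inr j => ![6, 7] j
  left_inv := by decide
  right_inv := by decide

def patB : Finset (Sym2 (Fin 9)) := {s(0, 1), s(1, 2), s(3, 4), s(5, 6), s(7, 8)}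
def patC : Finset (Sym2 (Fin 8)) := {s(0, 1), s(1, 2), s(2, 3), s(4, 5), s(6, 7)}

lemma hD1 : ∀ i j : Fin 9, X1.Adj (psi1 i) (psi1 j) ↔ s(i, j) ∈ patB := by decide
lemma hD2 : ∀ i j : Fin 8, X2.Adj (psi2 i) (psi2 j) ↔ s(i, j) ∈ patC := by decide
lemma hcov1 : ∀ i : Fin 9, ∃ e ∈ patB, i ∈ e := by decide
lemma hcov2 : ∀ i : Fin 8, ∃ e ∈ patC, i ∈ e := by decide


variable {t : Finset (Sym2 V)}

lemma inj9 {W : Type*} {a b c d e f g h i : W}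
    (n01 : a ≠ b) (n02 : a ≠ c) (n03 : a ≠ d) (n04 : a ≠ e) (n05 : a ≠ f) (n06 : a ≠ g)
    (n07 : a ≠ h) (n08 : a ≠ i)
    (n12 : b ≠ c) (n13 : b ≠ d) (n14 : b ≠ e) (n15 : b ≠ f) (n16 : b ≠ g) (n17 : b ≠ h)
    (n18 : b ≠ i)
    (n23 : c ≠ d) (n24 : c ≠ e) (n25 : c ≠ f) (n26 : c ≠ g) (n27 : c ≠ h) (n28 : c ≠ i)
    (n34 : d ≠ e) (n35 : d ≠ f) (n36 : d ≠ g) (n37 : d ≠ h) (n38 : d ≠ i)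
    (n45 : e ≠ f) (n46 : e ≠ g) (n47 : e ≠ h) (n48 : e ≠ i)
    (n56 : f ≠ g) (n57 : f ≠ h) (n58 : f ≠ i)
    (n67 : g ≠ h) (n68 : g ≠ i)
    (n78 : h ≠ i) :
    Function.Injective (![a, b, c, d, e, f, g, h, i] : Fin 9 → W) := by
  have hofn : List.ofFn (![a, b, c, d, e, f, g, h, i] : Fin 9 → W) =
      [a, b, c, d, e, f, g, h, i] := by
    simp [List.ofFn_succ]
  have hnodup : ([a, b, c, d, e, f, g, h, i] : List W).Nodup := by
    simp only [List.nodup_cons, List.mem_cons, List.mem_singleton, List.not_mem_nil,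
      List.nodup_nil, or_false, not_or, and_true]
    exact ⟨⟨n01, n02, n03, n04, n05, n06, n07, n08⟩, ⟨n12, n13, n14, n15, n16, n17, n18⟩,
      ⟨n23, n24, n25, n26, n27, n28⟩, ⟨n34, n35, n36, n37, n38⟩, ⟨n45, n46, n47, n48⟩,
      ⟨n56, n57, n58⟩, ⟨n67, n68⟩, ⟨n78, not_false⟩⟩
  exact List.nodup_ofFn.mp (hofn ▸ hnodup)

lemma inj8 {W : Type*} {a b c d e f g h : W}
    (n01 : a ≠ b) (n02 : a ≠ c) (n03 : a ≠ d) (n04 : a ≠ e) (n05 : a ≠ f) (n06 : a ≠ g)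
    (n07 : a ≠ h)
    (n12 : b ≠ c) (n13 : b ≠ d) (n14 : b ≠ e) (n15 : b ≠ f) (n16 : b ≠ g) (n17 : b ≠ h)
    (n23 : c ≠ d) (n24 : c ≠ e) (n25 : c ≠ f) (n26 : c ≠ g) (n27 : c ≠ h)
    (n34 : d ≠ e) (n35 : d ≠ f) (n36 : d ≠ g) (n37 : d ≠ h)
    (n45 : e ≠ f) (n46 : e ≠ g) (n47 : e ≠ h)
    (n56 : f ≠ g) (n57 : f ≠ h)
    (n67 : g ≠ h) :
    Function.Injective (![a, b, c, d, e, f, g, h] : Fin 8 → W) := by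
  have hofn : List.ofFn (![a, b, c, d, e, f, g, h] : Fin 8 → W) =
      [a, b, c, d, e, f, g, h] := by
    simp [List.ofFn_succ]
  have hnodup : ([a, b, c, d, e, f, g, h] : List W).Nodup := by
    simp only [List.nodup_cons, List.mem_cons, List.mem_singleton, List.not_mem_nil,
      List.nodup_nil, or_false, not_or, and_true]
    exact ⟨⟨n01, n02, n03, n04, n05, n06, n07⟩, ⟨n12, n13, n14, n15, n16, n17⟩,
      ⟨n23, n24, n25, n26, n27⟩, ⟨n34, n35, n36, n37⟩, ⟨n45, n46, n47⟩,
      ⟨n56, n57⟩, ⟨n67, not_false⟩⟩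
  exact List.nodup_ofFn.mp (hofn ▸ hnodup)

lemma key_ne {g g' : Sym2 V} (hnt : ¬ touch g g') {v w : V} (hv : v ∈ g) (hw : w ∈ g') :
    v ≠ w := fun heq => hnt ⟨v, hv, heq.symm ▸ hw⟩

lemma vshape_of_shapeB (hsub : t ⊆ G.edgeFinset) (h : shapeB t) : vshape patB t := by
  obtain ⟨hc5, e₁, e₂, h1t, h2t, hne, htch, hm1, hm2⟩ := h
  obtain ⟨b, hb1, hb2⟩ := htch
  obtain ⟨a, rfl⟩ := Sym2.mem_iff_exists.1 hb1
  obtain ⟨c, rfl⟩ := Sym2.mem_iff_exists.1 hb2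
  have hba : b ≠ a := (G.mem_edgeSet.1 (mem_edgeFinset.1 (hsub h1t))).ne
  have hbc : b ≠ c := (G.mem_edgeSet.1 (mem_edgeFinset.1 (hsub h2t))).ne
  have hac : a ≠ c := fun h => hne (by rw [h])
  have h2t' : s(b, c) ∈ t.erase s(b, a) := mem_erase.2 ⟨Ne.symm hne, h2t⟩
  set rest := (t.erase s(b, a)).erase s(b, c) with hrest
  have hmem_rest : ∀ g ∈ rest, g ≠ s(b, c) ∧ g ≠ s(b, a) ∧ g ∈ t := fun g hg =>
    ⟨ne_of_mem_erase hg, ne_of_mem_erase (mem_of_mem_erase hg),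
      mem_of_mem_erase (mem_of_mem_erase hg)⟩
  have hnt1 : ∀ g ∈ rest, ¬ touch s(b, a) g := fun g hg =>
    hm2 s(b, a) (mem_erase.2 ⟨hne, h1t⟩) g
      (mem_erase.2 ⟨(hmem_rest g hg).1, (hmem_rest g hg).2.2⟩)
      (fun hh => (hmem_rest g hg).2.1 hh.symm)
  have hnt2 : ∀ g ∈ rest, ¬ touch s(b, c) g := fun g hg =>
    hm1 s(b, c) h2t' g (mem_erase.2 ⟨(hmem_rest g hg).2.1, (hmem_rest g hg).2.2⟩)
      (fun hh => (hmem_rest g hg).1 hh.symm)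
  have hmrest : mset rest := mset_subset (erase_subset _ _) hm1
  have hcard_rest : rest.card = 3 := by
    rw [hrest, card_erase_of_mem h2t', card_erase_of_mem h1t, hc5]
  obtain ⟨g₃, g₄, g₅, hne34, hne35, hne45, hrest_eq⟩ := Finset.card_eq_three.1 hcard_rest
  have hg3 : g₃ ∈ rest := by rw [hrest_eq]; simp
  have hg4 : g₄ ∈ rest := by rw [hrest_eq]; simp
  have hg5 : g₅ ∈ rest := by rw [hrest_eq]; simp
  obtain ⟨x₃, y₃, hxy3, hg3e⟩ := exists_rep G (hsub (hmem_rest g₃ hg3).2.2)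
  obtain ⟨x₄, y₄, hxy4, hg4e⟩ := exists_rep G (hsub (hmem_rest g₄ hg4).2.2)
  obtain ⟨x₅, y₅, hxy5, hg5e⟩ := exists_rep G (hsub (hmem_rest g₅ hg5).2.2)
  subst hg3e hg4e hg5e
  -- membership shorthands
  have mba : b ∈ s(b, a) := Sym2.mem_mk_left _ _
  have maa : a ∈ s(b, a) := Sym2.mem_mk_right _ _
  have mbc : b ∈ s(b, c) := Sym2.mem_mk_left _ _
  have mcc : c ∈ s(b, c) := Sym2.mem_mk_right _ _
  have m3l : x₃ ∈ s(x₃, y₃) := Sym2.mem_mk_left _ _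
  have m3r : y₃ ∈ s(x₃, y₃) := Sym2.mem_mk_right _ _
  have m4l : x₄ ∈ s(x₄, y₄) := Sym2.mem_mk_left _ _
  have m4r : y₄ ∈ s(x₄, y₄) := Sym2.mem_mk_right _ _
  have m5l : x₅ ∈ s(x₅, y₅) := Sym2.mem_mk_left _ _
  have m5r : y₅ ∈ s(x₅, y₅) := Sym2.mem_mk_right _ _
  have nt34 : ¬ touch s(x₃, y₃) s(x₄, y₄) := hmrest _ hg3 _ hg4 hne34
  have nt35 : ¬ touch s(x₃, y₃) s(x₅, y₅) := hmrest _ hg3 _ hg5 hne35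
  have nt45 : ¬ touch s(x₄, y₄) s(x₅, y₅) := hmrest _ hg4 _ hg5 hne45
  set F : Fin 9 → V := ![a, b, c, x₃, y₃, x₄, y₄, x₅, y₅] with hF
  have hFinj : Function.Injective F := by
    have n01 : a ≠ b := hba.symm
    have n02 : a ≠ c := hac
    have n03 : a ≠ x₃ := key_ne (hnt1 _ hg3) maa m3l
    have n04 : a ≠ y₃ := key_ne (hnt1 _ hg3) maa m3r
    have n05 : a ≠ x₄ := key_ne (hnt1 _ hg4) maa m4l
    have n06 : a ≠ y₄ := key_ne (hnt1 _ hg4) maa m4r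
    have n07 : a ≠ x₅ := key_ne (hnt1 _ hg5) maa m5l
    have n08 : a ≠ y₅ := key_ne (hnt1 _ hg5) maa m5r
    have n12 : b ≠ c := hbc
    have n13 : b ≠ x₃ := key_ne (hnt1 _ hg3) mba m3l
    have n14 : b ≠ y₃ := key_ne (hnt1 _ hg3) mba m3r
    have n15 : b ≠ x₄ := key_ne (hnt1 _ hg4) mba m4l
    have n16 : b ≠ y₄ := key_ne (hnt1 _ hg4) mba m4r
    have n17 : b ≠ x₅ := key_ne (hnt1 _ hg5) mba m5l
    have n18 : b ≠ y₅ := key_ne (hnt1 _ hg5) mba m5r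
    have n23 : c ≠ x₃ := key_ne (hnt2 _ hg3) mcc m3l
    have n24 : c ≠ y₃ := key_ne (hnt2 _ hg3) mcc m3r
    have n25 : c ≠ x₄ := key_ne (hnt2 _ hg4) mcc m4l
    have n26 : c ≠ y₄ := key_ne (hnt2 _ hg4) mcc m4r
    have n27 : c ≠ x₅ := key_ne (hnt2 _ hg5) mcc m5l
    have n28 : c ≠ y₅ := key_ne (hnt2 _ hg5) mcc m5r
    have n34 : x₃ ≠ y₃ := hxy3
    have n35 : x₃ ≠ x₄ := key_ne nt34 m3l m4l
    have n36 : x₃ ≠ y₄ := key_ne nt34 m3l m4r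
    have n37 : x₃ ≠ x₅ := key_ne nt35 m3l m5l
    have n38 : x₃ ≠ y₅ := key_ne nt35 m3l m5r
    have n45 : y₃ ≠ x₄ := key_ne nt34 m3r m4l
    have n46 : y₃ ≠ y₄ := key_ne nt34 m3r m4r
    have n47 : y₃ ≠ x₅ := key_ne nt35 m3r m5l
    have n48 : y₃ ≠ y₅ := key_ne nt35 m3r m5r
    have n56 : x₄ ≠ y₄ := hxy4
    have n57 : x₄ ≠ x₅ := key_ne nt45 m4l m5l
    have n58 : x₄ ≠ y₅ := key_ne nt45 m4l m5r
    have n67 : y₄ ≠ x₅ := key_ne nt45 m4r m5l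
    have n68 : y₄ ≠ y₅ := key_ne nt45 m4r m5r
    have n78 : x₅ ≠ y₅ := hxy5
    exact inj9 n01 n02 n03 n04 n05 n06 n07 n08 n12 n13 n14 n15 n16 n17 n18
      n23 n24 n25 n26 n27 n28 n34 n35 n36 n37 n38 n45 n46 n47 n48 n56 n57 n58 n67 n68 n78
  refine ⟨F, hFinj, ?_⟩
  have himg : pimg patB F = {s(F 0, F 1), s(F 1, F 2), s(F 3, F 4), s(F 5, F 6), s(F 7, F 8)} := by
    simp [pimg, patB, Sym2.map_pair_eq]
  have hFval : F 0 = a ∧ F 1 = b ∧ F 2 = c ∧ F 3 = x₃ ∧ F 4 = y₃ ∧ F 5 = x₄ ∧ F 6 = y₄ ∧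
      F 7 = x₅ ∧ F 8 = y₅ := by
    refine ⟨rfl, rfl, rfl, rfl, rfl, rfl, rfl, rfl, rfl⟩
  obtain ⟨v0, v1, v2, v3, v4, v5, v6, v7, v8⟩ := hFval
  rw [himg, v0, v1, v2, v3, v4, v5, v6, v7, v8]
  have ht1 : t = insert s(b, a) (t.erase s(b, a)) := (insert_erase h1t).symm
  have ht2 : t.erase s(b, a) = insert s(b, c) rest := (insert_erase h2t').symm
  rw [ht1, ht2, hrest_eq]
  congr 1
  rw [Sym2.eq_swap]

lemma not_touch_iff {x y z w : V} : ¬ touch s(x, y) s(z, w) ↔ x ≠ z ∧ x ≠ w ∧ y ≠ z ∧ y ≠ w := by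
  constructor
  · intro h
    exact ⟨fun e => h ⟨x, by simp, by simp [e]⟩, fun e => h ⟨x, by simp, by simp [e]⟩,
      fun e => h ⟨y, by simp, by simp [e]⟩, fun e => h ⟨y, by simp, by simp [e]⟩⟩
  · rintro ⟨h1, h2, h3, h4⟩ ⟨v, hv1, hv2⟩
    rw [Sym2.mem_iff] at hv1 hv2
    rcases hv1 with rfl | rfl <;> rcases hv2 with rfl | rfl <;> simp_all

lemma shapeB_of_vshape (h : vshape patB t) : shapeB t := by
  obtain ⟨f, hinj, rfl⟩ := h
  have ht : pimg patB f = {s(f 0, f 1), s(f 1, f 2), s(f 3, f 4), s(f 5, f 6), s(f 7, f 8)} := by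
    simp [pimg, patB, Sym2.map_pair_eq]
  rw [ht]
  refine ⟨?_, s(f 0, f 1), s(f 1, f 2), by simp, by simp,
    by simp [Sym2.eq_iff, hinj.eq_iff], ⟨f 1, by simp, by simp⟩, ?_, ?_⟩
  · rw [card_insert_of_notMem (by simp [Sym2.eq_iff, hinj.eq_iff]),
      card_insert_of_notMem (by simp [Sym2.eq_iff, hinj.eq_iff]),
      card_insert_of_notMem (by simp [Sym2.eq_iff, hinj.eq_iff]),
      card_insert_of_notMem (by simp [Sym2.eq_iff, hinj.eq_iff]), card_singleton]
  · rw [Finset.erase_insert (by simp [Sym2.eq_iff, hinj.eq_iff])]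
    intro a ha b hb hab
    simp only [mem_insert, mem_singleton] at ha hb
    rcases ha with rfl | rfl | rfl | rfl <;> rcases hb with rfl | rfl | rfl | rfl <;>
      first
        | exact absurd rfl hab
        | simp [not_touch_iff, hinj.eq_iff]
  · rw [Finset.erase_insert_of_ne (by simp [Sym2.eq_iff, hinj.eq_iff]),
      Finset.erase_insert (by simp [Sym2.eq_iff, hinj.eq_iff])]
    intro a ha b hb hab
    simp only [mem_insert, mem_singleton] at ha hb
    rcases ha with rfl | rfl | rfl | rfl <;> rcases hb with rfl | rfl | rfl | rfl <;>
      first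
        | exact absurd rfl hab
        | simp [not_touch_iff, hinj.eq_iff]

lemma shapeC_of_vshape (h : vshape patC t) : shapeC t := by
  obtain ⟨f, hinj, rfl⟩ := h
  have ht : pimg patC f = {s(f 0, f 1), s(f 1, f 2), s(f 2, f 3), s(f 4, f 5), s(f 6, f 7)} := by
    simp [pimg, patC, Sym2.map_pair_eq]
  rw [ht]
  refine ⟨?_, s(f 0, f 1), s(f 1, f 2), s(f 2, f 3), by simp, by simp, by simp,
    by simp [Sym2.eq_iff, hinj.eq_iff], by simp [Sym2.eq_iff, hinj.eq_iff],
    by simp [Sym2.eq_iff, hinj.eq_iff],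
    ⟨f 1, by simp, by simp⟩, ⟨f 2, by simp, by simp⟩,
    by simp [not_touch_iff, hinj.eq_iff], ?_, ?_⟩
  · rw [card_insert_of_notMem (by simp [Sym2.eq_iff, hinj.eq_iff]),
      card_insert_of_notMem (by simp [Sym2.eq_iff, hinj.eq_iff]),
      card_insert_of_notMem (by simp [Sym2.eq_iff, hinj.eq_iff]),
      card_insert_of_notMem (by simp [Sym2.eq_iff, hinj.eq_iff]), card_singleton]
  · rw [Finset.erase_insert_of_ne (by simp [Sym2.eq_iff, hinj.eq_iff]),
      Finset.erase_insert (by simp [Sym2.eq_iff, hinj.eq_iff])]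
    intro a ha b hb hab
    simp only [mem_insert, mem_singleton] at ha hb
    rcases ha with rfl | rfl | rfl | rfl <;> rcases hb with rfl | rfl | rfl | rfl <;>
      first
        | exact absurd rfl hab
        | simp [not_touch_iff, hinj.eq_iff]
  · intro g hg hg1 hg2 hg3
    simp only [mem_insert, mem_singleton] at hg
    rcases hg with rfl | rfl | rfl | rfl | rfl
    · exact absurd rfl hg1
    · exact absurd rfl hg2
    · exact absurd rfl hg3
    · simp [not_touch_iff, hinj.eq_iff]
    · simp [not_touch_iff, hinj.eq_iff]

lemma vshape_of_shapeC (hsub : t ⊆ G.edgeFinset) (h : shapeC t) : vshape patC t := by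
  obtain ⟨hc5, e₁, e₂, e₃, h1t, h2t, h3t, h12, h13, h23, t12, t23, nt13, hm2, hall⟩ := h
  obtain ⟨u, hu1, hu2⟩ := t12
  obtain ⟨w, hw2, hw3⟩ := t23
  have huw : u ≠ w := fun hh => nt13 ⟨u, hu1, by rw [hh]; exact hw3⟩
  have he2 : e₂ = s(u, w) := (Sym2.mem_and_mem_iff huw).1 ⟨hu2, hw2⟩
  obtain ⟨a, rfl⟩ := Sym2.mem_iff_exists.1 hu1
  obtain ⟨d, rfl⟩ := Sym2.mem_iff_exists.1 hw3
  subst he2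
  have hua : u ≠ a := (G.mem_edgeSet.1 (mem_edgeFinset.1 (hsub h1t))).ne
  have hwd : w ≠ d := (G.mem_edgeSet.1 (mem_edgeFinset.1 (hsub h3t))).ne
  have haw : a ≠ w := fun hh =>
    nt13 ⟨w, by rw [← hh]; exact Sym2.mem_mk_right _ _, Sym2.mem_mk_left _ _⟩
  have hud : u ≠ d := fun hh =>
    nt13 ⟨u, Sym2.mem_mk_left _ _, by rw [hh]; exact Sym2.mem_mk_right _ _⟩
  have had : a ≠ d := fun hh =>
    nt13 ⟨a, Sym2.mem_mk_right _ _, by rw [hh]; exact Sym2.mem_mk_right _ _⟩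
  have h1' : s(u, a) ∈ t.erase s(u, w) := mem_erase.2 ⟨h12, h1t⟩
  have h3' : s(w, d) ∈ (t.erase s(u, w)).erase s(u, a) :=
    mem_erase.2 ⟨fun hh => h13 hh.symm, mem_erase.2 ⟨fun hh => h23 hh.symm, h3t⟩⟩
  set rest := ((t.erase s(u, w)).erase s(u, a)).erase s(w, d) with hrest
  have hmem_rest : ∀ g ∈ rest, g ≠ s(w, d) ∧ g ≠ s(u, a) ∧ g ≠ s(u, w) ∧ g ∈ t := fun g hg =>
    ⟨ne_of_mem_erase hg, ne_of_mem_erase (mem_of_mem_erase hg),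
      ne_of_mem_erase (mem_of_mem_erase (mem_of_mem_erase hg)),
      mem_of_mem_erase (mem_of_mem_erase (mem_of_mem_erase hg))⟩
  have hgmem2 : ∀ g ∈ rest, g ∈ t.erase s(u, w) := fun g hg =>
    mem_erase.2 ⟨(hmem_rest g hg).2.2.1, (hmem_rest g hg).2.2.2⟩
  have hnt1 : ∀ g ∈ rest, ¬ touch s(u, a) g := fun g hg =>
    hm2 s(u, a) h1' g (hgmem2 g hg) (fun hh => (hmem_rest g hg).2.1 hh.symm)
  have hnt3 : ∀ g ∈ rest, ¬ touch s(w, d) g := fun g hg =>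
    hm2 s(w, d) (mem_erase.2 ⟨fun hh => h23 hh.symm, h3t⟩) g (hgmem2 g hg)
      (fun hh => (hmem_rest g hg).1 hh.symm)
  have hnt2 : ∀ g ∈ rest, ¬ touch s(u, w) g := fun g hg => fun ⟨v, hv1, hv2⟩ =>
    hall g (hmem_rest g hg).2.2.2 (hmem_rest g hg).2.1 (hmem_rest g hg).2.2.1
      (hmem_rest g hg).1 ⟨v, hv2, hv1⟩
  have hmrest : mset rest := mset_subset (fun g hg => hgmem2 g hg) hm2
  have hcard_rest : rest.card = 2 := by
    rw [hrest, card_erase_of_mem h3', card_erase_of_mem h1', card_erase_of_mem h2t, hc5]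
  obtain ⟨g₄, g₅, hne45g, hrest_eq⟩ := Finset.card_eq_two.1 hcard_rest
  have hg4 : g₄ ∈ rest := by rw [hrest_eq]; simp
  have hg5 : g₅ ∈ rest := by rw [hrest_eq]; simp
  obtain ⟨x₄, y₄, hxy4, hg4e⟩ := exists_rep G (hsub (hmem_rest g₄ hg4).2.2.2)
  obtain ⟨x₅, y₅, hxy5, hg5e⟩ := exists_rep G (hsub (hmem_rest g₅ hg5).2.2.2)
  subst hg4e hg5e
  have mua : u ∈ s(u, a) := Sym2.mem_mk_left _ _
  have maa : a ∈ s(u, a) := Sym2.mem_mk_right _ _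
  have mww : w ∈ s(w, d) := Sym2.mem_mk_left _ _
  have mdd : d ∈ s(w, d) := Sym2.mem_mk_right _ _
  have m4l : x₄ ∈ s(x₄, y₄) := Sym2.mem_mk_left _ _
  have m4r : y₄ ∈ s(x₄, y₄) := Sym2.mem_mk_right _ _
  have m5l : x₅ ∈ s(x₅, y₅) := Sym2.mem_mk_left _ _
  have m5r : y₅ ∈ s(x₅, y₅) := Sym2.mem_mk_right _ _
  have nt45 : ¬ touch s(x₄, y₄) s(x₅, y₅) := hmrest _ hg4 _ hg5 hne45g
  set F : Fin 8 → V := ![a, u, w, d, x₄, y₄, x₅, y₅] with hF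
  have hFinj : Function.Injective F :=
    inj8 hua.symm haw had
      (key_ne (hnt1 _ hg4) maa m4l) (key_ne (hnt1 _ hg4) maa m4r)
      (key_ne (hnt1 _ hg5) maa m5l) (key_ne (hnt1 _ hg5) maa m5r)
      huw hud
      (key_ne (hnt1 _ hg4) mua m4l) (key_ne (hnt1 _ hg4) mua m4r)
      (key_ne (hnt1 _ hg5) mua m5l) (key_ne (hnt1 _ hg5) mua m5r)
      hwd
      (key_ne (hnt3 _ hg4) mww m4l) (key_ne (hnt3 _ hg4) mww m4r)
      (key_ne (hnt3 _ hg5) mww m5l) (key_ne (hnt3 _ hg5) mww m5r)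
      (key_ne (hnt3 _ hg4) mdd m4l) (key_ne (hnt3 _ hg4) mdd m4r)
      (key_ne (hnt3 _ hg5) mdd m5l) (key_ne (hnt3 _ hg5) mdd m5r)
      hxy4 (key_ne nt45 m4l m5l) (key_ne nt45 m4l m5r)
      (key_ne nt45 m4r m5l) (key_ne nt45 m4r m5r)
      hxy5
  refine ⟨F, hFinj, ?_⟩
  have himg : pimg patC F = {s(F 0, F 1), s(F 1, F 2), s(F 2, F 3), s(F 4, F 5), s(F 6, F 7)} := by
    simp [pimg, patC, Sym2.map_pair_eq]
  have v0 : F 0 = a := rfl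
  have v1 : F 1 = u := rfl
  have v2 : F 2 = w := rfl
  have v3 : F 3 = d := rfl
  have v4 : F 4 = x₄ := rfl
  have v5 : F 5 = y₄ := rfl
  have v6 : F 6 = x₅ := rfl
  have v7 : F 7 = y₅ := rfl
  rw [himg, v0, v1, v2, v3, v4, v5, v6, v7]
  have ht1 : t = insert s(u, w) (t.erase s(u, w)) := (insert_erase h2t).symm
  have ht2 : t.erase s(u, w) = insert s(u, a) ((t.erase s(u, w)).erase s(u, a)) :=
    (insert_erase h1').symm
  have ht3 : (t.erase s(u, w)).erase s(u, a) = insert s(w, d) rest := (insert_erase h3').symm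
  rw [ht1, ht2, ht3, hrest_eq, Finset.insert_comm]
  congr 1
  rw [Sym2.eq_swap]

lemma MB_eq_MV : MB G = MV G patB := by
  ext t
  rw [mem_MB, mem_MV]
  constructor
  · rintro ⟨h1, h2⟩
    exact ⟨h1, vshape_of_shapeB G h1 h2⟩
  · rintro ⟨h1, h2⟩
    exact ⟨h1, shapeB_of_vshape h2⟩

lemma MC_eq_MV : MC G = MV G patC := by
  ext t
  rw [mem_MC, mem_MV]
  constructor
  · rintro ⟨h1, h2⟩
    exact ⟨h1, vshape_of_shapeC G h1 h2⟩
  · rintro ⟨h1, h2⟩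
    exact ⟨h1, shapeC_of_vshape h2⟩

end Stmt5

theorem stmt_5 {V : Type*} [Fintype V] [DecidableEq V] (G : SimpleGraph V) [DecidableRel G.Adj]
    (hreg : G.IsRegularOfDegree 3) (hbip : G.Colorable 2) :
    16 * numMatchings G 4 = 2 * numSubgraphs G (pathGraph 3 ⊕g pathGraph 2 ⊕g pathGraph 2 ⊕g pathGraph 2) + 2 * numSubgraphs G (pathGraph 4 ⊕g pathGraph 2 ⊕g pathGraph 2) := by
  rw [Stmt5.numMatchings_eq G,
    Stmt5.numSubgraphs_eq G _ Stmt5.psi1 Stmt5.hD1 Stmt5.hcov1,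
    Stmt5.numSubgraphs_eq G _ Stmt5.psi2 Stmt5.hD2 Stmt5.hcov2,
    ← Stmt5.MB_eq_MV, ← Stmt5.MC_eq_MV]
  exact Stmt5.core_count G hreg
end

section
/- Let G be a finite simple 3-regular bipartite graph. Then 8·M(G,2) = N(P₃+K₂) + 4·N(C₄) + 2·N(P₄). -/
open SimpleGraph

set_option linter.unusedSectionVars false
set_option linter.unusedVariables false

open Finset

/-- A simple graph on `Fin n` built from a list of edges. -/
def mkP {n : ℕ} (l : List (Fin n × Fin n)) : SimpleGraph (Fin n) where
  Adj i j := i ≠ j ∧ ((i, j) ∈ l ∨ (j, i) ∈ l)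
  symm := ⟨by rintro i j ⟨h1, h2⟩; exact ⟨h1.symm, h2.symm⟩⟩
  loopless := ⟨fun i h => h.1 rfl⟩

instance {n : ℕ} (l : List (Fin n × Fin n)) : DecidableRel (mkP l).Adj :=
  fun i j => inferInstanceAs (Decidable (i ≠ j ∧ ((i, j) ∈ l ∨ (j, i) ∈ l)))

instance {n : ℕ} : DecidableRel (pathGraph n).Adj :=
  fun u v => decidable_of_iff' _ pathGraph_adj

instance {n : ℕ} : DecidableRel (cycleGraph n).Adj :=
  fun u v => decidable_of_iff' _ cycleGraph_adj'

instance {α β : Type*} (A : SimpleGraph α) (B : SimpleGraph β) [DecidableRel A.Adj]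
    [DecidableRel B.Adj] : DecidableRel (A ⊕g B).Adj := fun u v =>
  match u, v with
  | Sum.inl u, Sum.inl v => (inferInstance : Decidable (A.Adj u v))
  | Sum.inl _, Sum.inr _ => Decidable.isFalse (by simp)
  | Sum.inr _, Sum.inl _ => Decidable.isFalse (by simp)
  | Sum.inr u, Sum.inr v => (inferInstance : Decidable (B.Adj u v))


section Framework

variable {V : Type*} [Fintype V] [DecidableEq V] (G : SimpleGraph V)
variable {W : Type*} [Fintype W] [DecidableEq W] (P : SimpleGraph W)

/-- `f` embeds the pattern `P` into `G`. -/
def IsPatEmb (f : W → V) : Prop :=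
  Function.Injective f ∧ ∀ i j, P.Adj i j → G.Adj (f i) (f j)

/-- The subgraph of `G` spanned by the image of a pattern map. -/
def patSub (f : W → V) : G.Subgraph where
  verts := Set.range f
  Adj x y := G.Adj x y ∧ ∃ i j, P.Adj i j ∧ f i = x ∧ f j = y
  adj_sub h := h.1
  edge_vert := by rintro x y ⟨-, i, j, -, rfl, -⟩; exact ⟨i, rfl⟩
  symm := ⟨by rintro x y ⟨h, i, j, hij, rfl, rfl⟩; exact ⟨h.symm, j, i, hij.symm, rfl, rfl⟩⟩

lemma patSub_adj {f : W → V} (hf : IsPatEmb G P f) {x y : V} :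
    (patSub G P f).Adj x y ↔ ∃ i j, P.Adj i j ∧ f i = x ∧ f j = y := by
  constructor
  · exact fun h => h.2
  · rintro ⟨i, j, hij, rfl, rfl⟩; exact ⟨hf.2 i j hij, i, j, hij, rfl, rfl⟩

lemma patSub_adj_apply {f : W → V} (hf : IsPatEmb G P f) {i j : W} :
    (patSub G P f).Adj (f i) (f j) ↔ P.Adj i j := by
  rw [patSub_adj G P hf]
  constructor
  · rintro ⟨i', j', h, hi, hj⟩
    rwa [hf.1 hi, hf.1 hj] at h
  · exact fun h => ⟨i, j, h, rfl, rfl⟩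

/-- A pattern embedding yields a subgraph isomorphic to the pattern. -/
lemma nonempty_iso_of_patEmb {f : W → V} (hf : IsPatEmb G P f) :
    Nonempty ((patSub G P f).coe ≃g P) := by
  refine ⟨(⟨Equiv.ofInjective f hf.1, ?_⟩ : P ≃g (patSub G P f).coe).symm⟩
  intro i j
  show (patSub G P f).Adj (f i) (f j) ↔ P.Adj i j
  exact patSub_adj_apply G P hf

lemma exists_patEmb_of_iso {H : G.Subgraph} (e : H.coe ≃g P) :
    ∃ f : W → V, IsPatEmb G P f ∧ patSub G P f = H := by
  refine ⟨fun i => (e.symm i : V), ⟨?_, ?_⟩, ?_⟩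
  · exact Subtype.val_injective.comp (e.symm.toEquiv.injective)
  · intro i j hij
    exact H.adj_sub ((e.symm.map_adj_iff).2 hij)
  · ext x y
    · constructor
      · rintro ⟨i, rfl⟩; exact (e.symm i).2
      · intro hx
        exact ⟨e ⟨x, hx⟩, by simp⟩
    · constructor
      · rintro ⟨-, i, j, hij, rfl, rfl⟩
        exact (e.symm.map_adj_iff).2 hij
      · intro hxy
        refine ⟨H.adj_sub hxy, e ⟨x, H.edge_vert hxy⟩, e ⟨y, H.edge_vert hxy.symm⟩, ?_, by simp, by simp⟩
        have : H.coe.Adj ⟨x, H.edge_vert hxy⟩ ⟨y, H.edge_vert hxy.symm⟩ := hxy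
        rwa [← e.map_adj_iff] at this

/-- The automorphisms of the pattern graph, as a finset. -/
def patAut [DecidableRel P.Adj] : Finset (W ≃ W) :=
  Finset.univ.filter (fun σ => ∀ i j, P.Adj (σ i) (σ j) ↔ P.Adj i j)

open scoped Classical in
/-- All embeddings of the pattern into `G`, as a finset. -/
noncomputable def patT : Finset (W → V) := Finset.univ.filter (IsPatEmb G P)

lemma mem_patT {f : W → V} : f ∈ patT G P ↔ IsPatEmb G P f := by
  simp [patT]

lemma mem_patAut [DecidableRel P.Adj] {σ : W ≃ W} : σ ∈ patAut P ↔ ∀ i j, P.Adj (σ i) (σ j) ↔ P.Adj i j := by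
  simp [patAut]

open scoped Classical in
lemma fiber_card [DecidableRel P.Adj] (f₀ : W → V) (hf₀ : IsPatEmb G P f₀) :
    ((patT G P).filter (fun g => patSub G P g = patSub G P f₀)).card = (patAut P).card := by
  have hmem : ∀ {g : W → V}, g ∈ (patT G P).filter (fun g => patSub G P g = patSub G P f₀) →
      IsPatEmb G P g ∧ patSub G P g = patSub G P f₀ := by
    intro g hg; simpa [mem_patT] using hg
  have key : ∀ g (hg : IsPatEmb G P g) (heq : patSub G P g = patSub G P f₀),
      Set.range g = Set.range f₀ := by
    intro g hg heq
    have := congrArg SimpleGraph.Subgraph.verts heq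
    simpa [patSub] using this
  refine Finset.card_bij'
    (i := fun g hg => (Equiv.ofInjective g (hmem hg).1.1).trans
      ((Equiv.setCongr (key g (hmem hg).1 (hmem hg).2)).trans
        (Equiv.ofInjective f₀ hf₀.1).symm))
    (j := fun σ hσ => f₀ ∘ σ) ?_ ?_ ?_ ?_
  · -- i maps into patAut
    intro g hg
    have heval : ∀ x, f₀ ((Equiv.ofInjective g (hmem hg).1.1).trans
      ((Equiv.setCongr (key g (hmem hg).1 (hmem hg).2)).trans
        (Equiv.ofInjective f₀ hf₀.1).symm) x) = g x := by
      intro x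
      simp [Equiv.apply_ofInjective_symm]
    rw [mem_patAut]
    intro i j
    rw [← patSub_adj_apply G P hf₀, heval, heval, ← (hmem hg).2,
      patSub_adj_apply G P (hmem hg).1]
  · -- j maps into fiber
    intro σ hσ
    rw [mem_patAut] at hσ
    have hemb : IsPatEmb G P (f₀ ∘ σ) :=
      ⟨hf₀.1.comp σ.injective, fun i j h => hf₀.2 _ _ ((hσ i j).2 h)⟩
    simp only [Finset.mem_filter, mem_patT]
    refine ⟨hemb, ?_⟩
    ext x y
    · constructor
      · rintro ⟨i, rfl⟩; exact ⟨σ i, rfl⟩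
      · rintro ⟨i, rfl⟩; exact ⟨σ.symm i, by simp⟩
    · show (G.Adj x y ∧ _) ↔ (G.Adj x y ∧ _)
      refine and_congr_right fun _ => ?_
      constructor
      · rintro ⟨i, j, hij, rfl, rfl⟩
        exact ⟨σ i, σ j, (hσ i j).2 hij, rfl, rfl⟩
      · rintro ⟨i, j, hij, rfl, rfl⟩
        refine ⟨σ.symm i, σ.symm j, ?_, by simp, by simp⟩
        have := (hσ (σ.symm i) (σ.symm j))
        simp only [Equiv.apply_symm_apply] at this
        exact this.1 hij
  · -- left inverse
    intro g hg
    funext x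
    show f₀ (_) = g x
    simp [Equiv.apply_ofInjective_symm]
  · -- right inverse
    intro σ hσ
    ext x
    apply hf₀.1
    simp [Equiv.apply_ofInjective_symm]

open scoped Classical in
lemma card_patT_eq_mul [DecidableRel P.Adj] (S : Set G.Subgraph)
    (h1 : ∀ f, IsPatEmb G P f → patSub G P f ∈ S)
    (h2 : ∀ H ∈ S, ∃ f, IsPatEmb G P f ∧ patSub G P f = H) :
    (patT G P).card = (patAut P).card * S.ncard := by
  have hSeq : S = patSub G P '' {f | IsPatEmb G P f} := by
    ext H
    constructor
    · intro hH
      obtain ⟨f, hf, rfl⟩ := h2 H hH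
      exact ⟨f, hf, rfl⟩
    · rintro ⟨f, hf, rfl⟩
      exact h1 f hf
  have hS : S.Finite := by
    rw [hSeq]; exact (Set.toFinite _).image _
  have hmap : ∀ g ∈ patT G P, patSub G P g ∈ hS.toFinset := by
    intro g hg
    rw [Set.Finite.mem_toFinset]
    exact h1 g ((mem_patT G P).1 hg)
  rw [Finset.card_eq_sum_card_fiberwise hmap]
  have : ∀ H ∈ hS.toFinset,
      ((patT G P).filter (fun g => patSub G P g = H)).card = (patAut P).card := by
    intro H hH
    rw [Set.Finite.mem_toFinset] at hH
    obtain ⟨f₀, hf₀, rfl⟩ := h2 H hH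
    exact fiber_card G P f₀ hf₀
  rw [Finset.sum_congr rfl this, Finset.sum_const, smul_eq_mul,
    Set.ncard_eq_toFinset_card S hS, mul_comm]

end Framework

abbrev PM : SimpleGraph (Fin 4) := mkP [(0,1),(2,3)]
abbrev QP3 : SimpleGraph (Fin 4) := mkP [(0,1),(1,2),(2,3)]
abbrev Q5 : SimpleGraph (Fin 5) := mkP [(0,1),(1,2),(3,4)]
abbrev QP4 : SimpleGraph (Fin 5) := mkP [(0,1),(1,2),(2,3),(3,4)]
abbrev QC4 : SimpleGraph (Fin 4) := mkP [(0,1),(1,2),(2,3),(3,0)]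
abbrev Q6 : SimpleGraph (Fin 6) := mkP [(0,1),(1,2),(2,3),(4,5)]

set_option maxRecDepth 100000 in
lemma autPM : (patAut PM).card = 8 := by decide
set_option maxRecDepth 100000 in
lemma autQC4 : (patAut QC4).card = 8 := by decide
set_option maxRecDepth 100000 in
lemma autQP4 : (patAut QP4).card = 2 := by decide
set_option maxRecDepth 400000 in
lemma autQ6 : (patAut Q6).card = 4 := by decide

set_option maxRecDepth 10000 in
def isoQP4 : QP4 ≃g pathGraph 5 :=
  ⟨Equiv.refl _, fun {a b} => by revert a b; decide⟩
set_option maxRecDepth 10000 in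
def isoQC4 : QC4 ≃g cycleGraph 4 :=
  ⟨Equiv.refl _, fun {a b} => by revert a b; decide⟩
set_option maxRecDepth 10000 in
def isoQ6 : Q6 ≃g (pathGraph 4 ⊕g pathGraph 2) :=
  ⟨(finSumFinEquiv (m := 4) (n := 2)).symm, fun {a b} => by revert a b; decide⟩


lemma vec6_five {α : Type*} (a b c d e f : α) : ![a,b,c,d,e,f] (5 : Fin 6) = f := rfl

lemma inj4_iff {V : Type*} {a b c d : V} : Function.Injective ![a,b,c,d] ↔
    (a ≠ b ∧ a ≠ c ∧ a ≠ d ∧ b ≠ c ∧ b ≠ d ∧ c ≠ d) := by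
  constructor
  · intro h
    refine ⟨fun e => absurd (@h 0 1 (by simp [e])) (by decide),
      fun e => absurd (@h 0 2 (by simp [e])) (by decide),
      fun e => absurd (@h 0 3 (by simp [e])) (by decide),
      fun e => absurd (@h 1 2 (by simp [e])) (by decide),
      fun e => absurd (@h 1 3 (by simp [e])) (by decide),
      fun e => absurd (@h 2 3 (by simp [e])) (by decide)⟩
  · rintro ⟨h1, h2, h3, h4, h5, h6⟩ i j hij
    fin_cases i <;> fin_cases j <;> simp_all

lemma inj5_iff {V : Type*} {a b c d e : V} : Function.Injective ![a,b,c,d,e] ↔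
    (a ≠ b ∧ a ≠ c ∧ a ≠ d ∧ a ≠ e ∧ b ≠ c ∧ b ≠ d ∧ b ≠ e ∧ c ≠ d ∧ c ≠ e ∧ d ≠ e) := by
  constructor
  · intro h
    refine ⟨fun e => absurd (@h 0 1 (by simp [e])) (by decide),
      fun e => absurd (@h 0 2 (by simp [e])) (by decide),
      fun e => absurd (@h 0 3 (by simp [e])) (by decide),
      fun e => absurd (@h 0 4 (by simp [e])) (by decide),
      fun e => absurd (@h 1 2 (by simp [e])) (by decide),
      fun e => absurd (@h 1 3 (by simp [e])) (by decide),
      fun e => absurd (@h 1 4 (by simp [e])) (by decide),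
      fun e => absurd (@h 2 3 (by simp [e])) (by decide),
      fun e => absurd (@h 2 4 (by simp [e])) (by decide),
      fun e => absurd (@h 3 4 (by simp [e])) (by decide)⟩
  · rintro ⟨h1, h2, h3, h4, h5, h6, h7, h8, h9, h10⟩ i j hij
    fin_cases i <;> fin_cases j <;> simp_all

lemma inj6_iff {V : Type*} {a b c d e f : V} : Function.Injective ![a,b,c,d,e,f] ↔
    (a ≠ b ∧ a ≠ c ∧ a ≠ d ∧ a ≠ e ∧ a ≠ f ∧ b ≠ c ∧ b ≠ d ∧ b ≠ e ∧ b ≠ f ∧ c ≠ d ∧ c ≠ e ∧ c ≠ f ∧ d ≠ e ∧ d ≠ f ∧ e ≠ f) := by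
  constructor
  · intro h
    refine ⟨fun e => absurd (@h 0 1 (by simp [e, vec6_five])) (by decide),
      fun e => absurd (@h 0 2 (by simp [e, vec6_five])) (by decide),
      fun e => absurd (@h 0 3 (by simp [e, vec6_five])) (by decide),
      fun e => absurd (@h 0 4 (by simp [e, vec6_five])) (by decide),
      fun e => absurd (@h 0 5 (by simp [e, vec6_five])) (by decide),
      fun e => absurd (@h 1 2 (by simp [e, vec6_five])) (by decide),
      fun e => absurd (@h 1 3 (by simp [e, vec6_five])) (by decide),
      fun e => absurd (@h 1 4 (by simp [e, vec6_five])) (by decide),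
      fun e => absurd (@h 1 5 (by simp [e, vec6_five])) (by decide),
      fun e => absurd (@h 2 3 (by simp [e, vec6_five])) (by decide),
      fun e => absurd (@h 2 4 (by simp [e, vec6_five])) (by decide),
      fun e => absurd (@h 2 5 (by simp [e, vec6_five])) (by decide),
      fun e => absurd (@h 3 4 (by simp [e, vec6_five])) (by decide),
      fun e => absurd (@h 3 5 (by simp [e, vec6_five])) (by decide),
      fun e => absurd (@h 4 5 (by simp [e, vec6_five])) (by decide)⟩
  · rintro ⟨h1, h2, h3, h4, h5, h6, h7, h8, h9, h10, h11, h12, h13, h14, h15⟩ i j hij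
    fin_cases i <;> fin_cases j <;> simp_all [vec6_five]


section Main

variable {V : Type*} [Fintype V] [DecidableEq V] (G : SimpleGraph V) [DecidableRel G.Adj]

lemma isPatEmb_mkP_iff {n : ℕ} {l : List (Fin n × Fin n)} {f : Fin n → V} :
    IsPatEmb G (mkP l) f ↔
      Function.Injective f ∧ ∀ p ∈ l, p.1 ≠ p.2 → G.Adj (f p.1) (f p.2) := by
  constructor
  · rintro ⟨h1, h2⟩
    exact ⟨h1, fun p hp hne => h2 p.1 p.2 ⟨hne, Or.inl (by simpa using hp)⟩⟩
  · rintro ⟨h1, h2⟩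
    refine ⟨h1, ?_⟩
    rintro i j ⟨hne, hij | hij⟩
    · exact h2 (i, j) hij hne
    · exact (h2 (j, i) hij hne.symm).symm

lemma mem_TM {f : Fin 4 → V} : f ∈ patT G PM ↔
    Function.Injective f ∧ G.Adj (f 0) (f 1) ∧ G.Adj (f 2) (f 3) := by
  rw [mem_patT, isPatEmb_mkP_iff]
  simp [List.forall_mem_cons, show (0:Fin 4) ≠ 1 by decide, show (2:Fin 4) ≠ 3 by decide]

lemma mem_T3 {f : Fin 4 → V} : f ∈ patT G QP3 ↔
    Function.Injective f ∧ G.Adj (f 0) (f 1) ∧ G.Adj (f 1) (f 2) ∧ G.Adj (f 2) (f 3) := by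
  rw [mem_patT, isPatEmb_mkP_iff]
  simp [List.forall_mem_cons, show (0:Fin 4) ≠ 1 by decide, show (1:Fin 4) ≠ 2 by decide,
    show (2:Fin 4) ≠ 3 by decide, and_assoc]

lemma mem_TC {f : Fin 4 → V} : f ∈ patT G QC4 ↔
    Function.Injective f ∧ G.Adj (f 0) (f 1) ∧ G.Adj (f 1) (f 2) ∧ G.Adj (f 2) (f 3)
      ∧ G.Adj (f 3) (f 0) := by
  rw [mem_patT, isPatEmb_mkP_iff]
  simp [List.forall_mem_cons, show (0:Fin 4) ≠ 1 by decide, show (1:Fin 4) ≠ 2 by decide,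
    show (2:Fin 4) ≠ 3 by decide, show (3:Fin 4) ≠ 0 by decide, and_assoc]

lemma mem_T5 {f : Fin 5 → V} : f ∈ patT G Q5 ↔
    Function.Injective f ∧ G.Adj (f 0) (f 1) ∧ G.Adj (f 1) (f 2) ∧ G.Adj (f 3) (f 4) := by
  rw [mem_patT, isPatEmb_mkP_iff]
  simp [List.forall_mem_cons, show (0:Fin 5) ≠ 1 by decide, show (1:Fin 5) ≠ 2 by decide,
    show (3:Fin 5) ≠ 4 by decide, and_assoc]

lemma mem_TP4 {f : Fin 5 → V} : f ∈ patT G QP4 ↔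
    Function.Injective f ∧ G.Adj (f 0) (f 1) ∧ G.Adj (f 1) (f 2) ∧ G.Adj (f 2) (f 3)
      ∧ G.Adj (f 3) (f 4) := by
  rw [mem_patT, isPatEmb_mkP_iff]
  simp [List.forall_mem_cons, show (0:Fin 5) ≠ 1 by decide, show (1:Fin 5) ≠ 2 by decide,
    show (2:Fin 5) ≠ 3 by decide, show (3:Fin 5) ≠ 4 by decide, and_assoc]

lemma mem_T6 {f : Fin 6 → V} : f ∈ patT G Q6 ↔
    Function.Injective f ∧ G.Adj (f 0) (f 1) ∧ G.Adj (f 1) (f 2) ∧ G.Adj (f 2) (f 3)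
      ∧ G.Adj (f 4) (f 5) := by
  rw [mem_patT, isPatEmb_mkP_iff]
  simp [List.forall_mem_cons, show (0:Fin 6) ≠ 1 by decide, show (1:Fin 6) ≠ 2 by decide,
    show (2:Fin 6) ≠ 3 by decide, show (4:Fin 6) ≠ 5 by decide, and_assoc]

lemma no_triangle (hbip : G.Colorable 2) :
    ∀ a b c : V, G.Adj a b → G.Adj b c → ¬ G.Adj a c := by
  intro a b c hab hbc hac
  obtain ⟨C⟩ := hbip
  have h1 := C.valid hab
  have h2 := C.valid hbc
  have h3 := C.valid hac
  have v1 : (C a).val < 2 := (C a).isLt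
  have v2 : (C b).val < 2 := (C b).isLt
  have v3 : (C c).val < 2 := (C c).isLt
  simp only [Ne, Fin.ext_iff] at h1 h2 h3
  omega

open scoped Classical in
lemma E_card_eq {W : Type*} [Fintype W] [DecidableEq W] (T : Finset (W → V)) (i₀ i₁ : W)
    (hT : ∀ f ∈ T, G.Adj (f i₀) (f i₁)) (hreg : G.IsRegularOfDegree 3) :
    ((T ×ˢ Finset.univ).filter
      fun p : (W → V) × V => G.Adj (p.1 i₀) p.2 ∧ p.2 ≠ p.1 i₁).card = 2 * T.card := by
  have hmap : ∀ p ∈ ((T ×ˢ Finset.univ).filter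
      fun p : (W → V) × V => G.Adj (p.1 i₀) p.2 ∧ p.2 ≠ p.1 i₁), p.1 ∈ T := by
    intro p hp
    simp only [Finset.mem_filter, Finset.mem_product] at hp
    exact hp.1.1
  rw [Finset.card_eq_sum_card_fiberwise hmap]
  have hfib : ∀ f ∈ T, (((T ×ˢ Finset.univ).filter
      fun p : (W → V) × V => G.Adj (p.1 i₀) p.2 ∧ p.2 ≠ p.1 i₁).filter
        fun p => p.1 = f).card = 2 := by
    intro f hf
    have : (((T ×ˢ Finset.univ).filter
        fun p : (W → V) × V => G.Adj (p.1 i₀) p.2 ∧ p.2 ≠ p.1 i₁).filter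
          fun p => p.1 = f).card = ((G.neighborFinset (f i₀)).erase (f i₁)).card := by
      refine Finset.card_nbij' (fun p => p.2) (fun z => (f, z)) ?_ ?_ ?_ ?_
      · intro p hp
        simp only [Finset.mem_coe, Finset.mem_filter, Finset.mem_product] at hp
        obtain ⟨⟨-, h1, h2⟩, h3⟩ := hp
        rw [Finset.mem_coe, Finset.mem_erase, SimpleGraph.mem_neighborFinset]
        rw [h3] at h1 h2
        exact ⟨h2, h1⟩
      · intro z hz
        rw [Finset.mem_coe, Finset.mem_erase, SimpleGraph.mem_neighborFinset] at hz
        exact Finset.mem_filter.2 ⟨Finset.mem_filter.2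
          ⟨Finset.mem_product.2 ⟨hf, Finset.mem_univ _⟩, hz.2, hz.1⟩, rfl⟩
      · intro p hp
        have hp2 := (Finset.mem_filter.1 hp).2
        rw [← hp2]
      · intro z hz
        rfl
    rw [this, Finset.card_erase_of_mem, SimpleGraph.card_neighborFinset_eq_degree,
      hreg (f i₀)]
    rw [SimpleGraph.mem_neighborFinset]
    exact hT f hf
  rw [Finset.sum_congr rfl hfib, Finset.sum_const, smul_eq_mul, mul_comm]

open scoped Classical in
lemma identityA (hreg : G.IsRegularOfDegree 3) :
    2 * (patT G PM).card = 2 * (patT G QP3).card + (patT G Q5).card := by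
  have hadj : ∀ f ∈ patT G PM, G.Adj (f 0) (f 1) := fun f hf => ((mem_TM G).1 hf).2.1
  rw [← E_card_eq G (patT G PM) 0 1 hadj hreg]
  set E := ((patT G PM ×ˢ Finset.univ).filter
    fun p : (Fin 4 → V) × V => G.Adj (p.1 0) p.2 ∧ p.2 ≠ p.1 1) with hE
  have s1 := Finset.card_filter_add_card_filter_not
    (s := E) (p := fun p : (Fin 4 → V) × V => p.2 = p.1 2)
  have s2 := Finset.card_filter_add_card_filter_not
    (s := E.filter (fun p : (Fin 4 → V) × V => ¬ p.2 = p.1 2))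
    (p := fun p : (Fin 4 → V) × V => p.2 = p.1 3)
  have h1 : (E.filter fun p : (Fin 4 → V) × V => p.2 = p.1 2).card = (patT G QP3).card := by
    refine Finset.card_nbij' (fun p => ![p.1 1, p.1 0, p.1 2, p.1 3])
      (fun g => (![g 1, g 0, g 2, g 3], g 2)) ?_ ?_ ?_ ?_
    · rintro ⟨f, z⟩ hp
      dsimp only
      simp only [hE, Finset.mem_coe, Finset.mem_filter, Finset.mem_product] at hp
      obtain ⟨⟨⟨hf, -⟩, h1, h2⟩, h3⟩ := hp
      obtain ⟨hinj, ha, hb⟩ := (mem_TM G).1 hf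
      rw [Finset.mem_coe, mem_T3]
      refine ⟨?_, ?_, ?_, ?_⟩
      · rw [inj4_iff]
        exact ⟨hinj.ne (by decide), hinj.ne (by decide), hinj.ne (by decide),
          hinj.ne (by decide), hinj.ne (by decide), hinj.ne (by decide)⟩
      · simpa using ha.symm
      · simpa using h3 ▸ h1
      · simpa using hb
    · intro g hg
      obtain ⟨hinj, ha, hb, hc⟩ := (mem_T3 G).1 hg
      refine Finset.mem_filter.2 ⟨?_, rfl⟩
      rw [hE]
      refine Finset.mem_filter.2 ⟨Finset.mem_product.2 ⟨(mem_TM G).2 ⟨?_, ?_, ?_⟩,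
        Finset.mem_univ _⟩, ?_, ?_⟩
      · rw [inj4_iff]
        exact ⟨hinj.ne (by decide), hinj.ne (by decide), hinj.ne (by decide),
          hinj.ne (by decide), hinj.ne (by decide), hinj.ne (by decide)⟩
      · simpa using ha.symm
      · simpa using hc
      · simpa using hb
      · simpa using hinj.ne (show (2 : Fin 4) ≠ 0 by decide)
    · rintro ⟨f, z⟩ hp
      dsimp only
      have hc := (Finset.mem_filter.1 hp).2
      dsimp only at hc
      refine Prod.ext ?_ ?_
      · funext i
        fin_cases i <;> simp
      · simpa using hc.symm
    · intro g hg
      dsimp only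
      funext i
      fin_cases i <;> simp
  have h2 : ((E.filter fun p : (Fin 4 → V) × V => ¬ p.2 = p.1 2).filter
      fun p : (Fin 4 → V) × V => p.2 = p.1 3).card = (patT G QP3).card := by
    refine Finset.card_nbij' (fun p => ![p.1 1, p.1 0, p.1 3, p.1 2])
      (fun g => (![g 1, g 0, g 3, g 2], g 2)) ?_ ?_ ?_ ?_
    · rintro ⟨f, z⟩ hp
      dsimp only
      simp only [hE, Finset.mem_coe, Finset.mem_filter, Finset.mem_product] at hp
      obtain ⟨⟨⟨⟨hf, -⟩, h1, h2⟩, hnc⟩, h3⟩ := hp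
      obtain ⟨hinj, ha, hb⟩ := (mem_TM G).1 hf
      rw [Finset.mem_coe, mem_T3]
      refine ⟨?_, ?_, ?_, ?_⟩
      · rw [inj4_iff]
        exact ⟨hinj.ne (by decide), hinj.ne (by decide), hinj.ne (by decide),
          hinj.ne (by decide), hinj.ne (by decide), hinj.ne (by decide)⟩
      · simpa using ha.symm
      · simpa using h3 ▸ h1
      · simpa using hb.symm
    · intro g hg
      obtain ⟨hinj, ha, hb, hc⟩ := (mem_T3 G).1 hg
      refine Finset.mem_filter.2 ⟨Finset.mem_filter.2 ⟨?_, ?_⟩, rfl⟩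
      · rw [hE]
        refine Finset.mem_filter.2 ⟨Finset.mem_product.2 ⟨(mem_TM G).2 ⟨?_, ?_, ?_⟩,
          Finset.mem_univ _⟩, ?_, ?_⟩
        · rw [inj4_iff]
          exact ⟨hinj.ne (by decide), hinj.ne (by decide), hinj.ne (by decide),
            hinj.ne (by decide), hinj.ne (by decide), hinj.ne (by decide)⟩
        · simpa using ha.symm
        · simpa using hc.symm
        · simpa using hb
        · simpa using hinj.ne (show (2 : Fin 4) ≠ 0 by decide)
      · simpa using hinj.ne (show (2 : Fin 4) ≠ 3 by decide)
    · rintro ⟨f, z⟩ hp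
      dsimp only
      have hc := (Finset.mem_filter.1 hp).2
      dsimp only at hc
      refine Prod.ext ?_ ?_
      · funext i
        fin_cases i <;> simp
      · simpa using hc.symm
    · intro g hg
      dsimp only
      funext i
      fin_cases i <;> simp
  have h3 : ((E.filter fun p : (Fin 4 → V) × V => ¬ p.2 = p.1 2).filter
      fun p : (Fin 4 → V) × V => ¬ p.2 = p.1 3).card = (patT G Q5).card := by
    refine Finset.card_nbij' (fun p => ![p.1 1, p.1 0, p.2, p.1 2, p.1 3])
      (fun g => (![g 1, g 0, g 3, g 4], g 2)) ?_ ?_ ?_ ?_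
    · rintro ⟨f, z⟩ hp
      dsimp only
      simp only [hE, Finset.mem_coe, Finset.mem_filter, Finset.mem_product] at hp
      obtain ⟨⟨⟨⟨hf, -⟩, h1, h2⟩, hnc1⟩, hnc2⟩ := hp
      obtain ⟨hinj, ha, hb⟩ := (mem_TM G).1 hf
      rw [Finset.mem_coe, mem_T5]
      refine ⟨?_, ?_, ?_, ?_⟩
      · rw [inj5_iff]
        exact ⟨hinj.ne (by decide), Ne.symm h2, hinj.ne (by decide), hinj.ne (by decide),
          h1.ne, hinj.ne (by decide), hinj.ne (by decide), hnc1, hnc2,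
          hinj.ne (by decide)⟩
      · simpa using ha.symm
      · simpa using h1
      · simpa using hb
    · intro g hg
      obtain ⟨hinj, ha, hb, hc⟩ := (mem_T5 G).1 hg
      refine Finset.mem_filter.2 ⟨Finset.mem_filter.2 ⟨?_, ?_⟩, ?_⟩
      · rw [hE]
        refine Finset.mem_filter.2 ⟨Finset.mem_product.2 ⟨(mem_TM G).2 ⟨?_, ?_, ?_⟩,
          Finset.mem_univ _⟩, ?_, ?_⟩
        · rw [inj4_iff]
          exact ⟨hinj.ne (by decide), hinj.ne (by decide), hinj.ne (by decide),
            hinj.ne (by decide), hinj.ne (by decide), hinj.ne (by decide)⟩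
        · simpa using ha.symm
        · simpa using hc
        · simpa using hb
        · simpa using hinj.ne (show (2 : Fin 5) ≠ 0 by decide)
      · simpa using hinj.ne (show (2 : Fin 5) ≠ 3 by decide)
      · simpa using hinj.ne (show (2 : Fin 5) ≠ 4 by decide)
    · rintro ⟨f, z⟩ hp
      dsimp only
      refine Prod.ext ?_ ?_
      · funext i
        fin_cases i <;> simp
      · simp
    · intro g hg
      dsimp only
      funext i
      fin_cases i <;> simp
  omega

open scoped Classical in
lemma identityB (hreg : G.IsRegularOfDegree 3)
    (hfree : ∀ a b c : V, G.Adj a b → G.Adj b c → ¬ G.Adj a c) :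
    2 * (patT G Q5).card = 2 * (patT G QP4).card + (patT G Q6).card := by
  have hadj : ∀ f ∈ patT G Q5, G.Adj (f 0) (f 1) := fun f hf => ((mem_T5 G).1 hf).2.1
  rw [← E_card_eq G (patT G Q5) 0 1 hadj hreg]
  set E := ((patT G Q5 ×ˢ Finset.univ).filter
    fun p : (Fin 5 → V) × V => G.Adj (p.1 0) p.2 ∧ p.2 ≠ p.1 1) with hE
  have s1 := Finset.card_filter_add_card_filter_not
    (s := E) (p := fun p : (Fin 5 → V) × V => p.2 = p.1 3)
  have s2 := Finset.card_filter_add_card_filter_not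
    (s := E.filter (fun p : (Fin 5 → V) × V => ¬ p.2 = p.1 3))
    (p := fun p : (Fin 5 → V) × V => p.2 = p.1 4)
  have h1 : (E.filter fun p : (Fin 5 → V) × V => p.2 = p.1 3).card = (patT G QP4).card := by
    refine Finset.card_nbij' (fun p => ![p.1 2, p.1 1, p.1 0, p.1 3, p.1 4])
      (fun g => (![g 2, g 1, g 0, g 3, g 4], g 3)) ?_ ?_ ?_ ?_
    · rintro ⟨f, z⟩ hp
      dsimp only
      simp only [hE, Finset.mem_coe, Finset.mem_filter, Finset.mem_product] at hp
      obtain ⟨⟨⟨hf, -⟩, h1, h2⟩, h3⟩ := hp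
      obtain ⟨hinj, ha, hb, hc⟩ := (mem_T5 G).1 hf
      rw [Finset.mem_coe, mem_TP4]
      refine ⟨?_, ?_, ?_, ?_, ?_⟩
      · rw [inj5_iff]
        exact ⟨hinj.ne (by decide), hinj.ne (by decide), hinj.ne (by decide),
          hinj.ne (by decide), hinj.ne (by decide), hinj.ne (by decide),
          hinj.ne (by decide), hinj.ne (by decide), hinj.ne (by decide),
          hinj.ne (by decide)⟩
      · simpa using hb.symm
      · simpa using ha.symm
      · simpa using h3 ▸ h1
      · simpa using hc
    · intro g hg
      obtain ⟨hinj, ha, hb, hc, hd⟩ := (mem_TP4 G).1 hg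
      refine Finset.mem_filter.2 ⟨?_, rfl⟩
      rw [hE]
      refine Finset.mem_filter.2 ⟨Finset.mem_product.2 ⟨(mem_T5 G).2 ⟨?_, ?_, ?_, ?_⟩,
        Finset.mem_univ _⟩, ?_, ?_⟩
      · rw [inj5_iff]
        exact ⟨hinj.ne (by decide), hinj.ne (by decide), hinj.ne (by decide),
          hinj.ne (by decide), hinj.ne (by decide), hinj.ne (by decide),
          hinj.ne (by decide), hinj.ne (by decide), hinj.ne (by decide),
          hinj.ne (by decide)⟩
      · simpa using hb.symm
      · simpa using ha.symm
      · simpa using hd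
      · simpa using hc
      · simpa using hinj.ne (show (3 : Fin 5) ≠ 1 by decide)
    · rintro ⟨f, z⟩ hp
      dsimp only
      have hc := (Finset.mem_filter.1 hp).2
      dsimp only at hc
      refine Prod.ext ?_ ?_
      · funext i
        fin_cases i <;> simp
      · simpa using hc.symm
    · intro g hg
      dsimp only
      funext i
      fin_cases i <;> simp
  have h2 : ((E.filter fun p : (Fin 5 → V) × V => ¬ p.2 = p.1 3).filter
      fun p : (Fin 5 → V) × V => p.2 = p.1 4).card = (patT G QP4).card := by
    refine Finset.card_nbij' (fun p => ![p.1 2, p.1 1, p.1 0, p.1 4, p.1 3])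
      (fun g => (![g 2, g 1, g 0, g 4, g 3], g 3)) ?_ ?_ ?_ ?_
    · rintro ⟨f, z⟩ hp
      dsimp only
      simp only [hE, Finset.mem_coe, Finset.mem_filter, Finset.mem_product] at hp
      obtain ⟨⟨⟨⟨hf, -⟩, h1, h2⟩, hnc⟩, h3⟩ := hp
      obtain ⟨hinj, ha, hb, hc⟩ := (mem_T5 G).1 hf
      rw [Finset.mem_coe, mem_TP4]
      refine ⟨?_, ?_, ?_, ?_, ?_⟩
      · rw [inj5_iff]
        exact ⟨hinj.ne (by decide), hinj.ne (by decide), hinj.ne (by decide),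
          hinj.ne (by decide), hinj.ne (by decide), hinj.ne (by decide),
          hinj.ne (by decide), hinj.ne (by decide), hinj.ne (by decide),
          hinj.ne (by decide)⟩
      · simpa using hb.symm
      · simpa using ha.symm
      · simpa using h3 ▸ h1
      · simpa using hc.symm
    · intro g hg
      obtain ⟨hinj, ha, hb, hc, hd⟩ := (mem_TP4 G).1 hg
      refine Finset.mem_filter.2 ⟨Finset.mem_filter.2 ⟨?_, ?_⟩, rfl⟩
      · rw [hE]
        refine Finset.mem_filter.2 ⟨Finset.mem_product.2 ⟨(mem_T5 G).2 ⟨?_, ?_, ?_, ?_⟩,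
          Finset.mem_univ _⟩, ?_, ?_⟩
        · rw [inj5_iff]
          exact ⟨hinj.ne (by decide), hinj.ne (by decide), hinj.ne (by decide),
            hinj.ne (by decide), hinj.ne (by decide), hinj.ne (by decide),
            hinj.ne (by decide), hinj.ne (by decide), hinj.ne (by decide),
            hinj.ne (by decide)⟩
        · simpa using hb.symm
        · simpa using ha.symm
        · simpa using hd.symm
        · simpa using hc
        · simpa using hinj.ne (show (3 : Fin 5) ≠ 1 by decide)
      · simpa using hinj.ne (show (3 : Fin 5) ≠ 4 by decide)
    · rintro ⟨f, z⟩ hp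
      dsimp only
      have hc := (Finset.mem_filter.1 hp).2
      dsimp only at hc
      refine Prod.ext ?_ ?_
      · funext i
        fin_cases i <;> simp
      · simpa using hc.symm
    · intro g hg
      dsimp only
      funext i
      fin_cases i <;> simp
  have h3 : ((E.filter fun p : (Fin 5 → V) × V => ¬ p.2 = p.1 3).filter
      fun p : (Fin 5 → V) × V => ¬ p.2 = p.1 4).card = (patT G Q6).card := by
    refine Finset.card_nbij' (fun p => ![p.2, p.1 0, p.1 1, p.1 2, p.1 3, p.1 4])
      (fun g => (![g 1, g 2, g 3, g 4, g 5], g 0)) ?_ ?_ ?_ ?_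
    · rintro ⟨f, z⟩ hp
      dsimp only
      simp only [hE, Finset.mem_coe, Finset.mem_filter, Finset.mem_product] at hp
      obtain ⟨⟨⟨⟨hf, -⟩, h1, h2⟩, hnc1⟩, hnc2⟩ := hp
      obtain ⟨hinj, ha, hb, hc⟩ := (mem_T5 G).1 hf
      have hz2 : z ≠ f 2 := fun e => hfree (f 0) (f 1) (f 2) ha hb (e ▸ h1)
      rw [Finset.mem_coe, mem_T6]
      refine ⟨?_, ?_, ?_, ?_, ?_⟩
      · rw [inj6_iff]
        exact ⟨h1.ne', h2, hz2, hnc1, hnc2,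
          hinj.ne (by decide), hinj.ne (by decide), hinj.ne (by decide),
          hinj.ne (by decide), hinj.ne (by decide), hinj.ne (by decide),
          hinj.ne (by decide), hinj.ne (by decide), hinj.ne (by decide),
          hinj.ne (by decide)⟩
      · simpa using h1.symm
      · simpa using ha
      · simpa using hb
      · simpa [vec6_five] using hc
    · intro g hg
      obtain ⟨hinj, ha, hb, hc, hd⟩ := (mem_T6 G).1 hg
      refine Finset.mem_filter.2 ⟨Finset.mem_filter.2 ⟨?_, ?_⟩, ?_⟩
      · rw [hE]
        refine Finset.mem_filter.2 ⟨Finset.mem_product.2 ⟨(mem_T5 G).2 ⟨?_, ?_, ?_, ?_⟩,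
          Finset.mem_univ _⟩, ?_, ?_⟩
        · rw [inj5_iff]
          exact ⟨hinj.ne (by decide), hinj.ne (by decide), hinj.ne (by decide),
            hinj.ne (by decide), hinj.ne (by decide), hinj.ne (by decide),
            hinj.ne (by decide), hinj.ne (by decide), hinj.ne (by decide),
            hinj.ne (by decide)⟩
        · simpa using hb
        · simpa using hc
        · simpa [vec6_five] using hd
        · simpa using ha.symm
        · simpa using hinj.ne (show (0 : Fin 6) ≠ 2 by decide)
      · simpa using hinj.ne (show (0 : Fin 6) ≠ 4 by decide)
      · simpa [vec6_five] using hinj.ne (show (0 : Fin 6) ≠ 5 by decide)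
    · rintro ⟨f, z⟩ hp
      dsimp only
      refine Prod.ext ?_ ?_
      · funext i
        fin_cases i <;> simp [vec6_five]
      · simp
    · intro g hg
      dsimp only
      funext i
      fin_cases i <;> simp [vec6_five]
  omega

open scoped Classical in
lemma identityC (hreg : G.IsRegularOfDegree 3)
    (hfree : ∀ a b c : V, G.Adj a b → G.Adj b c → ¬ G.Adj a c) :
    2 * (patT G QP3).card = (patT G QC4).card + (patT G QP4).card := by
  have hadj : ∀ f ∈ patT G QP3, G.Adj (f 0) (f 1) := fun f hf => ((mem_T3 G).1 hf).2.1
  rw [← E_card_eq G (patT G QP3) 0 1 hadj hreg]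
  rw [← Finset.card_filter_add_card_filter_not
    (p := fun p : (Fin 4 → V) × V => p.2 = p.1 3)]
  congr 1
  · -- C4 part
    refine Finset.card_nbij' (fun p => p.1) (fun g => (g, g 3)) ?_ ?_ ?_ ?_
    · rintro ⟨f, z⟩ hp
      dsimp only
      simp only [Finset.mem_coe, Finset.mem_filter, Finset.mem_product] at hp
      obtain ⟨⟨⟨hf, -⟩, h1, h2⟩, h3⟩ := hp
      obtain ⟨hinj, ha, hb, hc⟩ := (mem_T3 G).1 hf
      rw [Finset.mem_coe, mem_TC]
      refine ⟨hinj, ha, hb, hc, ?_⟩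
      rw [← h3]
      exact h1.symm
    · intro g hg
      obtain ⟨hinj, ha, hb, hc, hd⟩ := (mem_TC G).1 hg
      refine Finset.mem_filter.2 ⟨Finset.mem_filter.2 ⟨Finset.mem_product.2
        ⟨(mem_T3 G).2 ⟨hinj, ha, hb, hc⟩, Finset.mem_univ _⟩, hd.symm, ?_⟩, rfl⟩
      exact hinj.ne (by decide)
    · rintro ⟨f, z⟩ hp
      dsimp only
      have := (Finset.mem_filter.1 hp).2
      dsimp only at this
      rw [← this]
    · intro g hg
      rfl
  · -- P4 part
    refine Finset.card_nbij'
      (fun p => ![p.2, p.1 0, p.1 1, p.1 2, p.1 3])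
      (fun g => (![g 1, g 2, g 3, g 4], g 0)) ?_ ?_ ?_ ?_
    · rintro ⟨f, z⟩ hp
      dsimp only
      simp only [Finset.mem_coe, Finset.mem_filter, Finset.mem_product] at hp
      obtain ⟨⟨⟨hf, -⟩, h1, h2⟩, h3⟩ := hp
      obtain ⟨hinj, ha, hb, hc⟩ := (mem_T3 G).1 hf
      rw [Finset.mem_coe, mem_TP4]
      have hz0 : z ≠ f 0 := h1.ne'
      have hz2 : z ≠ f 2 := fun e => hfree (f 0) (f 1) (f 2) ha hb (e ▸ h1)
      have hz3 : z ≠ f 3 := h3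
      refine ⟨?_, ?_, ?_, ?_, ?_⟩
      · rw [inj5_iff]
        exact ⟨hz0, h2, hz2, hz3, hinj.ne (by decide), hinj.ne (by decide),
          hinj.ne (by decide), hinj.ne (by decide), hinj.ne (by decide),
          hinj.ne (by decide)⟩
      · simpa using h1.symm
      · simpa using ha
      · simpa using hb
      · simpa using hc
    · intro g hg
      obtain ⟨hinj, ha, hb, hc, hd⟩ := (mem_TP4 G).1 hg
      refine Finset.mem_filter.2 ⟨Finset.mem_filter.2 ⟨Finset.mem_product.2
        ⟨(mem_T3 G).2 ⟨?_, ?_, ?_, ?_⟩, Finset.mem_univ _⟩, ?_, ?_⟩, ?_⟩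
      · rw [inj4_iff]
        exact ⟨hinj.ne (by decide), hinj.ne (by decide), hinj.ne (by decide),
          hinj.ne (by decide), hinj.ne (by decide), hinj.ne (by decide)⟩
      · simpa using hb
      · simpa using hc
      · simpa using hd
      · simpa using ha.symm
      · simpa using hinj.ne (show (0 : Fin 5) ≠ 2 by decide)
      · simpa using hinj.ne (show (0 : Fin 5) ≠ 4 by decide)
    · rintro ⟨f, z⟩ hp
      dsimp only
      refine Prod.ext ?_ ?_
      · funext i
        fin_cases i <;> simp
      · simp
    · intro g hg
      dsimp only
      funext i
      fin_cases i <;> simp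

lemma card_patT_eq_numSubgraphs {W W' : Type*} [Fintype W] [DecidableEq W]
    (P : SimpleGraph W) [DecidableRel P.Adj] (X : SimpleGraph W') (e : P ≃g X) :
    (patT G P).card = (patAut P).card * numSubgraphs G X := by
  apply card_patT_eq_mul
  · intro f hf
    obtain ⟨iso⟩ := nonempty_iso_of_patEmb G P hf
    exact ⟨iso.trans e⟩
  · rintro H ⟨iso⟩
    exact exists_patEmb_of_iso G P (iso.trans e.symm)

open scoped Classical in
lemma card_TM_eq (hreg : G.IsRegularOfDegree 3) :
    (patT G PM).card = 8 * numMatchings G 2 := by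
  rw [numMatchings, ← autPM]
  apply card_patT_eq_mul
  · -- forward: patSub of an embedding is a 2-matching
    intro f hf
    obtain ⟨hinj, ha, hb⟩ := (mem_TM G).1 ((mem_patT G PM).2 hf)
    have hset : (patSub G PM f).edgeSet = {s(f 0, f 1), s(f 2, f 3)} := by
      ext e
      induction e using Sym2.ind with
      | _ x y =>
        rw [SimpleGraph.Subgraph.mem_edgeSet, patSub_adj G PM hf]
        constructor
        · rintro ⟨i, j, hij, rfl, rfl⟩
          have key : ∀ i j : Fin 4, PM.Adj i j →
              (i = 0 ∧ j = 1) ∨ (i = 1 ∧ j = 0) ∨ (i = 2 ∧ j = 3) ∨ (i = 3 ∧ j = 2) := by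
            decide
          rcases key i j hij with ⟨rfl, rfl⟩ | ⟨rfl, rfl⟩ | ⟨rfl, rfl⟩ | ⟨rfl, rfl⟩
          · exact Set.mem_insert _ _
          · exact Set.mem_insert_iff.2 (Or.inl Sym2.eq_swap)
          · exact Set.mem_insert_of_mem _ rfl
          · exact Set.mem_insert_of_mem _ (Set.mem_singleton_iff.2 Sym2.eq_swap)
        · intro h
          simp only [Set.mem_insert_iff, Set.mem_singleton_iff] at h
          rcases h with h | h <;> rw [Sym2.eq_iff] at h <;>
            rcases h with ⟨rfl, rfl⟩ | ⟨rfl, rfl⟩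
          · exact ⟨0, 1, by decide, rfl, rfl⟩
          · exact ⟨1, 0, by decide, rfl, rfl⟩
          · exact ⟨2, 3, by decide, rfl, rfl⟩
          · exact ⟨3, 2, by decide, rfl, rfl⟩
    constructor
    · -- matching
      rintro v ⟨i, rfl⟩
      have key : ∀ i j : Fin 4, PM.Adj i j → j = ![1,0,3,2] i := by decide
      refine ⟨f (![1,0,3,2] i), ?_, ?_⟩
      · show (patSub G PM f).Adj (f i) (f (![1,0,3,2] i))
        rw [patSub_adj_apply G PM hf]
        fin_cases i <;> decide
      · intro y hy
        rw [patSub_adj G PM hf] at hy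
        obtain ⟨a, b, hab, hai, rfl⟩ := hy
        have hae : a = i := hinj hai
        subst hae
        exact congrArg f (key a b hab)
    · rw [hset]
      apply Set.ncard_pair
      intro hcontr
      rw [Sym2.eq_iff] at hcontr
      rcases hcontr with ⟨h1, -⟩ | ⟨h1, -⟩
      · exact hinj.ne (show (0 : Fin 4) ≠ 2 by decide) h1
      · exact hinj.ne (show (0 : Fin 4) ≠ 3 by decide) h1
  · -- backward
    rintro H ⟨hm, hcard⟩
    rw [Set.ncard_eq_two] at hcard
    obtain ⟨e1, e2, hne, hset⟩ := hcard
    obtain ⟨a, b, rfl⟩ : ∃ x y, e1 = s(x, y) := by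
      induction e1 using Sym2.ind with | _ x y => exact ⟨x, y, rfl⟩
    obtain ⟨c, d, rfl⟩ : ∃ x y, e2 = s(x, y) := by
      induction e2 using Sym2.ind with | _ x y => exact ⟨x, y, rfl⟩
    have hab : H.Adj a b := by
      rw [← SimpleGraph.Subgraph.mem_edgeSet, hset]
      exact Set.mem_insert _ _
    have hcd : H.Adj c d := by
      rw [← SimpleGraph.Subgraph.mem_edgeSet, hset]
      exact Set.mem_insert_of_mem _ rfl
    have huniq : ∀ x y y', H.Adj x y → H.Adj x y' → y = y' := by
      intro x y y' h h'
      obtain ⟨w, hw, hu⟩ := hm (H.edge_vert h)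
      rw [hu y h, hu y' h']
    have hne_ab : a ≠ b := (H.adj_sub hab).ne
    have hne_cd : c ≠ d := (H.adj_sub hcd).ne
    have hac : a ≠ c := by
      rintro rfl
      exact hne (by rw [huniq a b d hab hcd])
    have had : a ≠ d := by
      rintro rfl
      have hbc := huniq a b c hab hcd.symm
      exact hne (by rw [hbc, Sym2.eq_swap])
    have hbc : b ≠ c := by
      rintro rfl
      have had' := huniq b a d hab.symm hcd
      exact hne (by rw [← had', Sym2.eq_swap])
    have hbd : b ≠ d := by
      rintro rfl
      have hac' := huniq b a c hab.symm hcd.symm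
      exact hne (by rw [hac'])
    have hinj : Function.Injective ![a, b, c, d] := by
      rw [inj4_iff]
      exact ⟨hne_ab, hac, had, hbc, hbd, hne_cd⟩
    have hfT : ![a, b, c, d] ∈ patT G PM :=
      (mem_TM G).2 ⟨hinj, by simpa using H.adj_sub hab, by simpa using H.adj_sub hcd⟩
    have hf : IsPatEmb G PM ![a, b, c, d] := (mem_patT G PM).1 hfT
    refine ⟨![a, b, c, d], hf, ?_⟩
    ext x y
    · constructor
      · rintro ⟨i, rfl⟩
        fin_cases i
        · exact H.edge_vert hab
        · exact H.edge_vert hab.symm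
        · exact H.edge_vert hcd
        · exact H.edge_vert hcd.symm
      · intro hx
        obtain ⟨w, hw, -⟩ := hm hx
        have hmem : s(x, w) ∈ H.edgeSet := (SimpleGraph.Subgraph.mem_edgeSet).2 hw
        rw [hset] at hmem
        simp only [Set.mem_insert_iff, Set.mem_singleton_iff] at hmem
        rcases hmem with h | h <;> rw [Sym2.eq_iff] at h <;>
          rcases h with ⟨rfl, -⟩ | ⟨rfl, -⟩
        · exact ⟨0, rfl⟩
        · exact ⟨1, rfl⟩
        · exact ⟨2, rfl⟩
        · exact ⟨3, rfl⟩
    · rw [patSub_adj G PM hf]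
      constructor
      · rintro ⟨i, j, hij, rfl, rfl⟩
        have key : ∀ i j : Fin 4, PM.Adj i j →
            (i = 0 ∧ j = 1) ∨ (i = 1 ∧ j = 0) ∨ (i = 2 ∧ j = 3) ∨ (i = 3 ∧ j = 2) := by
          decide
        rcases key i j hij with ⟨rfl, rfl⟩ | ⟨rfl, rfl⟩ | ⟨rfl, rfl⟩ | ⟨rfl, rfl⟩
        · simpa using hab
        · simpa using hab.symm
        · simpa using hcd
        · simpa using hcd.symm
      · intro hxy
        have hmem : s(x, y) ∈ H.edgeSet := (SimpleGraph.Subgraph.mem_edgeSet).2 hxy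
        rw [hset] at hmem
        simp only [Set.mem_insert_iff, Set.mem_singleton_iff] at hmem
        rcases hmem with h | h <;> rw [Sym2.eq_iff] at h <;>
          rcases h with ⟨rfl, rfl⟩ | ⟨rfl, rfl⟩
        · exact ⟨0, 1, by decide, rfl, rfl⟩
        · exact ⟨1, 0, by decide, rfl, rfl⟩
        · exact ⟨2, 3, by decide, rfl, rfl⟩
        · exact ⟨3, 2, by decide, rfl, rfl⟩

end Main

theorem stmt_9 {V : Type*} [Fintype V] [DecidableEq V] (G : SimpleGraph V) [DecidableRel G.Adj]
    (hreg : G.IsRegularOfDegree 3) (hbip : G.Colorable 2) :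
    8 * numMatchings G 2 =
      numSubgraphs G (pathGraph 4 ⊕g pathGraph 2) + 4 * numSubgraphs G (cycleGraph 4) + 2 * numSubgraphs G (pathGraph 5) := by
  have hfree := no_triangle G hbip
  have hA := identityA G hreg
  have hB := identityB G hreg hfree
  have hC := identityC G hreg hfree
  have hM : (patT G PM).card = 8 * numMatchings G 2 := card_TM_eq G hreg
  have hC4 : (patT G QC4).card = 8 * numSubgraphs G (cycleGraph 4) := by
    rw [card_patT_eq_numSubgraphs G QC4 (cycleGraph 4) isoQC4, autQC4]
  have hP5 : (patT G QP4).card = 2 * numSubgraphs G (pathGraph 5) := by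
    rw [card_patT_eq_numSubgraphs G QP4 (pathGraph 5) isoQP4, autQP4]
  have h6 : (patT G Q6).card = 4 * numSubgraphs G (pathGraph 4 ⊕g pathGraph 2) := by
    rw [card_patT_eq_numSubgraphs G Q6 _ isoQ6, autQ6]
  omega
end

section
/- Let G be a finite simple 3-regular bipartite graph on exactly 2h+8 vertices (h a natural number) having exactly six cycles of length 4, any two distinct 4-cycles of G sharing at most one edge. Then the number of paths of length 5 in G satisfies N(P₅) = 48h + 120. -/
open SimpleGraph

section Aux

set_option linter.unusedSectionVars false
set_option linter.unusedVariables false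

open Finset Function

variable {V : Type*} [Fintype V] [DecidableEq V] (G : SimpleGraph V) [DecidableRel G.Adj]

def tsub {n : ℕ} (X : SimpleGraph (Fin n)) (f : Fin n → V) : G.Subgraph where
  verts := Set.range f
  Adj x y := G.Adj x y ∧ ∃ i j, X.Adj i j ∧ f i = x ∧ f j = y
  adj_sub h := h.1
  edge_vert h := by obtain ⟨_, i, j, _, hx, _⟩ := h; exact ⟨i, hx⟩
  symm := ⟨fun x y h => by
    obtain ⟨hG, i, j, ha, hx, hy⟩ := h
    exact ⟨hG.symm, j, i, ha.symm, hy, hx⟩⟩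

def goodT {n : ℕ} (X : SimpleGraph (Fin n)) [DecidableRel X.Adj] : Finset (Fin n → V) :=
  univ.filter fun f => Function.Injective f ∧ ∀ i j, X.Adj i j → G.Adj (f i) (f j)

def autSet {n : ℕ} (X : SimpleGraph (Fin n)) [DecidableRel X.Adj] : Finset (Equiv.Perm (Fin n)) :=
  univ.filter fun σ => ∀ i j, X.Adj i j ↔ X.Adj (σ i) (σ j)

variable {G}

lemma good_iso {n : ℕ} {X : SimpleGraph (Fin n)} [DecidableRel X.Adj] {f : Fin n → V}
    (hf : f ∈ goodT G X) : Nonempty ((tsub G X f).coe ≃g X) := by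
  obtain ⟨hinj, hadj⟩ := by simpa [goodT] using hf
  refine ⟨(⟨Equiv.ofInjective f hinj, ?_⟩ : X ≃g (tsub G X f).coe).symm⟩
  intro i j
  rw [Subgraph.coe_adj]
  show (tsub G X f).Adj (f i) (f j) ↔ X.Adj i j
  rw [tsub]
  constructor
  · rintro ⟨-, i', j', hij, hi, hj⟩
    rwa [hinj hi, hinj hj] at hij
  · intro hij; exact ⟨hadj _ _ hij, i, j, hij, rfl, rfl⟩

lemma iso_good {n : ℕ} {X : SimpleGraph (Fin n)} [DecidableRel X.Adj] {H : G.Subgraph}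
    (e : H.coe ≃g X) :
    (fun i => ((e.symm i : H.verts) : V)) ∈ goodT G X ∧
      tsub G X (fun i => ((e.symm i : H.verts) : V)) = H := by
  set f : Fin n → V := fun i => ((e.symm i : H.verts) : V) with hfdef
  have hinj : Function.Injective f := fun i j hij => by
    apply e.symm.injective; exact Subtype.ext hij
  have hXG : ∀ i j, X.Adj i j → H.Adj (f i) (f j) := by
    intro i j hij
    have : H.coe.Adj (e.symm i) (e.symm j) := by
      rw [← e.map_adj_iff]; simpa using hij
    simpa [Subgraph.coe_adj] using this
  have hgood : f ∈ goodT G X := by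
    simp only [goodT, mem_filter, mem_univ, true_and]
    exact ⟨hinj, fun i j hij => (hXG i j hij).adj_sub⟩
  refine ⟨hgood, ?_⟩
  ext x y
  · constructor
    · rintro ⟨i, rfl⟩; exact (e.symm i).2
    · intro hx; exact ⟨e ⟨x, hx⟩, by simp [hfdef]⟩
  · rw [tsub]
    constructor
    · rintro ⟨-, i, j, hij, rfl, rfl⟩; exact hXG i j hij
    · intro hxy
      have hx : x ∈ H.verts := H.edge_vert hxy
      have hy : y ∈ H.verts := H.edge_vert hxy.symm
      refine ⟨hxy.adj_sub, e ⟨x, hx⟩, e ⟨y, hy⟩, ?_, by simp [hfdef], by simp [hfdef]⟩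
      rw [e.map_adj_iff]
      simpa [Subgraph.coe_adj] using hxy

lemma tsub_comp_perm {n : ℕ} {X : SimpleGraph (Fin n)} [DecidableRel X.Adj]
    (f : Fin n → V) {σ : Equiv.Perm (Fin n)} (hσ : ∀ i j, X.Adj i j ↔ X.Adj (σ i) (σ j)) :
    tsub G X (f ∘ σ) = tsub G X f := by
  ext x y
  · show x ∈ Set.range (f ∘ σ) ↔ x ∈ Set.range f
    constructor
    · rintro ⟨i, rfl⟩; exact ⟨σ i, rfl⟩
    · rintro ⟨i, rfl⟩; exact ⟨σ.symm i, by simp⟩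
  · rw [tsub, tsub]
    simp only [comp_apply]
    constructor
    · rintro ⟨hG, i, j, hij, rfl, rfl⟩
      exact ⟨hG, σ i, σ j, (hσ i j).1 hij, rfl, rfl⟩
    · rintro ⟨hG, i, j, hij, rfl, rfl⟩
      refine ⟨hG, σ.symm i, σ.symm j, ?_, by simp, by simp⟩
      rw [hσ]; simpa using hij

open Classical in
lemma fiber_card_s10 {n : ℕ} {X : SimpleGraph (Fin n)} [DecidableRel X.Adj] {H : G.Subgraph}
    (e : H.coe ≃g X) :
    ((goodT G X).filter fun g => tsub G X g = H).card = (autSet X).card := by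
  obtain ⟨hgood, htsub⟩ := iso_good (G := G) e
  set f : Fin n → V := fun i => ((e.symm i : H.verts) : V) with hfdef
  have hfinj : Function.Injective f := fun i j hij => by
    apply e.symm.injective; exact Subtype.ext hij
  refine (Finset.card_bij (fun (σ : Equiv.Perm (Fin n)) (_ : σ ∈ autSet X) => f ∘ σ) ?_ ?_ ?_).symm
  · -- maps into the fiber
    intro σ hσ
    simp only [autSet, mem_filter, mem_univ, true_and] at hσ
    simp only [mem_filter]
    obtain ⟨hfi, hfa⟩ := by simpa [goodT] using hgood
    refine ⟨?_, ?_⟩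
    · simp only [goodT, mem_filter, mem_univ, true_and]
      refine ⟨hfinj.comp σ.injective, fun i j hij => hfa _ _ ((hσ i j).1 hij)⟩
    · rw [tsub_comp_perm f hσ]; exact htsub
  · -- injective
    intro σ _ σ' _ hc
    ext i
    have := congrFun hc i
    simp only [comp_apply] at this
    exact congrArg Fin.val (hfinj this)
  · -- surjective
    intro g hg
    simp only [mem_filter] at hg
    obtain ⟨hgmem, hgH⟩ := hg
    obtain ⟨hginj, hgadj⟩ := by simpa [goodT] using hgmem
    have hv : ∀ i, g i ∈ H.verts := by
      intro i
      rw [← hgH]; exact ⟨i, rfl⟩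
    set σ0 : Fin n → Fin n := fun i => e ⟨g i, hv i⟩ with hσ0
    have hσ0inj : Function.Injective σ0 := by
      intro i j hij
      apply hginj
      have := e.injective hij
      exact congrArg Subtype.val this
    have hbij := Finite.injective_iff_bijective.mp hσ0inj
    set σ : Equiv.Perm (Fin n) := Equiv.ofBijective σ0 hbij with hσdef
    have key : ∀ i j, X.Adj (σ0 i) (σ0 j) ↔ X.Adj i j := by
      intro i j
      rw [hσ0]
      simp only
      rw [e.map_adj_iff, Subgraph.coe_adj]
      show H.Adj (g i) (g j) ↔ X.Adj i j
      rw [← hgH, tsub]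
      constructor
      · rintro ⟨-, i', j', hij, hi, hj⟩
        rwa [hginj hi, hginj hj] at hij
      · intro hij; exact ⟨hgadj _ _ hij, i, j, hij, rfl, rfl⟩
    refine ⟨σ, ?_, ?_⟩
    · simp only [autSet, mem_filter, mem_univ, true_and]
      intro i j
      exact (key i j).symm
    · funext i
      show f (σ0 i) = g i
      rw [hσ0, hfdef]
      simp

open Classical in
lemma card_goodT {n : ℕ} (X : SimpleGraph (Fin n)) [DecidableRel X.Adj] :
    (goodT G X).card = (autSet X).card * numSubgraphs G X := by
  classical
  set I : Finset G.Subgraph := (goodT G X).image (tsub G X) with hI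
  have hS : {H : G.Subgraph | Nonempty (H.coe ≃g X)} = ↑I := by
    ext H
    simp only [Set.mem_setOf_eq, hI, coe_image, Set.mem_image, mem_coe]
    constructor
    · rintro ⟨e⟩
      exact ⟨_, (iso_good e).1, (iso_good e).2⟩
    · rintro ⟨f, hf, rfl⟩
      exact good_iso hf
  have hnum : numSubgraphs G X = I.card := by
    rw [numSubgraphs, hS, Set.ncard_coe_finset]
  rw [hnum]
  rw [Finset.card_eq_sum_card_fiberwise
    (f := tsub G X) (t := I) (fun f hf => Finset.mem_image_of_mem _ hf)]
  have hfib : ∀ H ∈ I, ((goodT G X).filter fun g => tsub G X g = H).card = (autSet X).card := by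
    intro H hH
    have hne : Nonempty (H.coe ≃g X) := by
      have : H ∈ ({H : G.Subgraph | Nonempty (H.coe ≃g X)} : Set G.Subgraph) := by
        rw [hS]; exact hH
      exact this
    exact fiber_card_s10 hne.some
  rw [Finset.sum_congr rfl hfib, Finset.sum_const, smul_eq_mul, mul_comm]

variable (G)

/-- ordered paths with k edges -/
def pt (k : ℕ) : Finset (Fin (k+1) → V) :=
  univ.filter fun f => Function.Injective f ∧ ∀ i : Fin k, G.Adj (f i.castSucc) (f i.succ)

/-- valid extensions of a path tuple -/
def ptExt {k : ℕ} (f : Fin (k+1) → V) : Finset V :=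
  G.neighborFinset (f (Fin.last k)) \ (univ.image f)

variable {G}

lemma mem_pt {k : ℕ} {f : Fin (k+1) → V} :
    f ∈ pt G k ↔ Function.Injective f ∧ ∀ i : Fin k, G.Adj (f i.castSucc) (f i.succ) := by
  simp [pt]

lemma card_pt_zero : (pt G 0).card = Fintype.card V := by
  have : pt G 0 = univ := by
    ext f
    simp only [mem_pt, mem_univ, iff_true]
    exact ⟨fun a b _ => Fin.ext (by omega), fun i => i.elim0⟩
  rw [this, card_univ, Fintype.card_fun]
  simp

lemma card_pt_succ (k : ℕ) : (pt G (k+1)).card = ∑ f ∈ pt G k, (ptExt G f).card := by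
  rw [← Finset.card_sigma]
  refine Finset.card_bij' (fun f _ => ⟨Fin.init f, f (Fin.last (k+1))⟩)
    (fun p _ => Fin.snoc p.1 p.2) ?_ ?_ ?_ ?_
  · intro f hf
    obtain ⟨hinj, hadj⟩ := mem_pt.mp hf
    rw [Finset.mem_sigma]
    refine ⟨mem_pt.mpr ⟨hinj.comp (Fin.castSucc_injective _), fun i => ?_⟩, ?_⟩
    · show G.Adj (f i.castSucc.castSucc) (f i.succ.castSucc)
      rw [← Fin.succ_castSucc]
      exact hadj i.castSucc
    · rw [ptExt, Finset.mem_sdiff]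
      constructor
      · rw [mem_neighborFinset]
        show G.Adj (f (Fin.last k).castSucc) (f (Fin.last (k+1)))
        rw [← Fin.succ_last]
        exact hadj (Fin.last k)
      · simp only [Finset.mem_image, mem_univ, true_and, not_exists]
        intro j hj
        exact absurd (hinj hj) (Fin.castSucc_lt_last j).ne
  · rintro ⟨g, v⟩ hp
    rw [Finset.mem_sigma] at hp
    obtain ⟨hg, hv⟩ := hp
    obtain ⟨hinj, hadj⟩ := mem_pt.mp hg
    rw [ptExt, Finset.mem_sdiff, mem_neighborFinset] at hv
    obtain ⟨hvadj, hvim⟩ := hv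
    simp only [Finset.mem_image, mem_univ, true_and, not_exists] at hvim
    rw [mem_pt]
    constructor
    · intro a b hab
      simp only at hab
      induction a using Fin.lastCases with
      | last =>
        induction b using Fin.lastCases with
        | last => rfl
        | cast b =>
          rw [Fin.snoc_last, Fin.snoc_castSucc] at hab
          exact absurd hab.symm (hvim b)
      | cast a =>
        induction b using Fin.lastCases with
        | last =>
          rw [Fin.snoc_castSucc, Fin.snoc_last] at hab
          exact absurd hab (hvim a)
        | cast b =>
          rw [Fin.snoc_castSucc, Fin.snoc_castSucc] at hab
          exact congrArg Fin.castSucc (hinj hab)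
    · intro i
      simp only
      induction i using Fin.lastCases with
      | last =>
        rw [Fin.succ_last, Fin.snoc_last, Fin.snoc_castSucc]
        exact hvadj
      | cast i =>
        rw [Fin.succ_castSucc, Fin.snoc_castSucc, Fin.snoc_castSucc]
        exact hadj i
  · intro f _
    exact Fin.snoc_init_self f
  · rintro ⟨g, v⟩ _
    simp [Fin.init_snoc]

lemma color_eq (c : G.Coloring (Fin 2)) {a b d : V} (hab : G.Adj a b) (hbd : G.Adj b d) :
    c a = c d := by
  have h1 := c.valid hab
  have h2 := c.valid hbd
  have : ∀ x y z : Fin 2, x ≠ y → y ≠ z → x = z := by decide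
  exact this _ _ _ h1 h2

lemma card_ptExt_eq {k : ℕ} (hreg : G.IsRegularOfDegree 3) (f : Fin (k+1) → V) (T : Finset V)
    (hT : univ.image f ∩ G.neighborFinset (f (Fin.last k)) = T) :
    (ptExt G f).card = 3 - T.card := by
  rw [ptExt]
  have h1 : G.neighborFinset (f (Fin.last k)) \ univ.image f
      = G.neighborFinset (f (Fin.last k)) \ T := by
    rw [← hT]; ext x; simp only [Finset.mem_sdiff, Finset.mem_inter]; tauto
  rw [h1, Finset.card_sdiff_of_subset (hT ▸ Finset.inter_subset_right)]
  rw [card_neighborFinset_eq_degree, hreg]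

lemma card_ptExt0 (hreg : G.IsRegularOfDegree 3) (f : Fin 1 → V) (hf : f ∈ pt G 0) :
    (ptExt G f).card = 3 := by
  rw [card_ptExt_eq hreg f ∅ ?_]
  · rfl
  · ext x
    simp only [Finset.mem_inter, Finset.mem_image, mem_univ, true_and, mem_neighborFinset,
      Finset.notMem_empty, iff_false, not_and]
    rintro ⟨i, rfl⟩
    have hi := i.isLt
    have : i = Fin.last 0 := Fin.ext (by simp)
    rw [this]
    exact fun h => G.irrefl h

lemma card_ptExt1 (hreg : G.IsRegularOfDegree 3) (f : Fin 2 → V) (hf : f ∈ pt G 1) :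
    (ptExt G f).card = 2 := by
  obtain ⟨hinj, hadj⟩ := mem_pt.mp hf
  have h01 : G.Adj (f 0) (f 1) := hadj ⟨0, by omega⟩
  rw [card_ptExt_eq hreg f {f 0} ?_]
  · simp
  · ext x
    simp only [Finset.mem_inter, Finset.mem_image, mem_univ, true_and, mem_neighborFinset,
      Finset.mem_singleton]
    constructor
    · rintro ⟨⟨i, rfl⟩, hN⟩
      fin_cases i
      · rfl
      · exact absurd hN (G.irrefl)
    · rintro rfl
      exact ⟨⟨0, rfl⟩, h01.symm⟩

lemma card_ptExt2 (hreg : G.IsRegularOfDegree 3) (c : G.Coloring (Fin 2)) (f : Fin 3 → V)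
    (hf : f ∈ pt G 2) : (ptExt G f).card = 2 := by
  obtain ⟨hinj, hadj⟩ := mem_pt.mp hf
  have h01 : G.Adj (f 0) (f 1) := hadj ⟨0, by omega⟩
  have h12 : G.Adj (f 1) (f 2) := hadj ⟨1, by omega⟩
  have hpar : c (f 0) = c (f 2) := color_eq c h01 h12
  rw [card_ptExt_eq hreg f {f 1} ?_]
  · simp
  · ext x
    simp only [Finset.mem_inter, Finset.mem_image, mem_univ, true_and, mem_neighborFinset,
      Finset.mem_singleton]
    constructor
    · rintro ⟨⟨i, rfl⟩, hN⟩
      fin_cases i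
      · exact absurd hpar (c.valid hN.symm)
      · rfl
      · exact absurd hN (G.irrefl)
    · rintro rfl
      exact ⟨⟨1, rfl⟩, h12.symm⟩

lemma card_ptExt3 (hreg : G.IsRegularOfDegree 3) (c : G.Coloring (Fin 2)) (f : Fin 4 → V)
    (hf : f ∈ pt G 3) :
    (ptExt G f).card = if G.Adj (f 0) (f 3) then 1 else 2 := by
  obtain ⟨hinj, hadj⟩ := mem_pt.mp hf
  have h01 : G.Adj (f 0) (f 1) := hadj ⟨0, by omega⟩
  have h12 : G.Adj (f 1) (f 2) := hadj ⟨1, by omega⟩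
  have h23 : G.Adj (f 2) (f 3) := hadj ⟨2, by omega⟩
  have hpar13 : c (f 1) = c (f 3) := color_eq c h12 h23
  by_cases hA : G.Adj (f 0) (f 3)
  · rw [if_pos hA, card_ptExt_eq hreg f {f 0, f 2} ?_]
    · rw [Finset.card_insert_of_notMem (by
        simp only [Finset.mem_singleton]
        exact fun h => absurd (hinj h) (by decide)), Finset.card_singleton]
    · ext x
      simp only [Finset.mem_inter, Finset.mem_image, mem_univ, true_and, mem_neighborFinset,
        Finset.mem_insert, Finset.mem_singleton]
      constructor
      · rintro ⟨⟨i, rfl⟩, hN⟩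
        fin_cases i
        · exact Or.inl rfl
        · exact absurd hpar13 (c.valid hN.symm)
        · exact Or.inr rfl
        · exact absurd hN (G.irrefl)
      · rintro (rfl | rfl)
        · exact ⟨⟨0, rfl⟩, hA.symm⟩
        · exact ⟨⟨2, rfl⟩, h23.symm⟩
  · rw [if_neg hA, card_ptExt_eq hreg f {f 2} ?_]
    · simp
    · ext x
      simp only [Finset.mem_inter, Finset.mem_image, mem_univ, true_and, mem_neighborFinset,
        Finset.mem_singleton]
      constructor
      · rintro ⟨⟨i, rfl⟩, hN⟩
        fin_cases i
        · exact absurd hN.symm hA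
        · exact absurd hpar13 (c.valid hN.symm)
        · rfl
        · exact absurd hN (G.irrefl)
      · rintro rfl
        exact ⟨⟨2, rfl⟩, h23.symm⟩

lemma card_ptExt4 (hreg : G.IsRegularOfDegree 3) (c : G.Coloring (Fin 2)) (f : Fin 5 → V)
    (hf : f ∈ pt G 4) :
    (ptExt G f).card = if G.Adj (f 1) (f 4) then 1 else 2 := by
  obtain ⟨hinj, hadj⟩ := mem_pt.mp hf
  have h01 : G.Adj (f 0) (f 1) := hadj ⟨0, by omega⟩
  have h12 : G.Adj (f 1) (f 2) := hadj ⟨1, by omega⟩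
  have h23 : G.Adj (f 2) (f 3) := hadj ⟨2, by omega⟩
  have h34 : G.Adj (f 3) (f 4) := hadj ⟨3, by omega⟩
  have hpar24 : c (f 2) = c (f 4) := color_eq c h23 h34
  have hpar04 : c (f 0) = c (f 4) := (color_eq c h01 h12).trans hpar24
  by_cases hA : G.Adj (f 1) (f 4)
  · rw [if_pos hA, card_ptExt_eq hreg f {f 1, f 3} ?_]
    · rw [Finset.card_insert_of_notMem (by
        simp only [Finset.mem_singleton]
        exact fun h => absurd (hinj h) (by decide)), Finset.card_singleton]
    · ext x
      simp only [Finset.mem_inter, Finset.mem_image, mem_univ, true_and, mem_neighborFinset,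
        Finset.mem_insert, Finset.mem_singleton]
      constructor
      · rintro ⟨⟨i, rfl⟩, hN⟩
        fin_cases i
        · exact absurd hpar04 (c.valid hN.symm)
        · exact Or.inl rfl
        · exact absurd hpar24 (c.valid hN.symm)
        · exact Or.inr rfl
        · exact absurd hN (G.irrefl)
      · rintro (rfl | rfl)
        · exact ⟨⟨1, rfl⟩, hA.symm⟩
        · exact ⟨⟨3, rfl⟩, h34.symm⟩
  · rw [if_neg hA, card_ptExt_eq hreg f {f 3} ?_]
    · simp
    · ext x
      simp only [Finset.mem_inter, Finset.mem_image, mem_univ, true_and, mem_neighborFinset,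
        Finset.mem_singleton]
      constructor
      · rintro ⟨⟨i, rfl⟩, hN⟩
        fin_cases i
        · exact absurd hpar04 (c.valid hN.symm)
        · exact absurd hN.symm hA
        · exact absurd hpar24 (c.valid hN.symm)
        · rfl
        · exact absurd hN (G.irrefl)
      · rintro rfl
        exact ⟨⟨3, rfl⟩, h34.symm⟩

lemma A_eq : (pt G 3).filter (fun f => G.Adj (f 0) (f 3)) = goodT G (cycleGraph 4) := by
  ext f
  simp only [Finset.mem_filter, mem_pt, goodT, mem_univ, true_and]
  constructor
  · rintro ⟨⟨hinj, hadj⟩, hA⟩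
    have h01 : G.Adj (f 0) (f 1) := hadj ⟨0, by omega⟩
    have h12 : G.Adj (f 1) (f 2) := hadj ⟨1, by omega⟩
    have h23 : G.Adj (f 2) (f 3) := hadj ⟨2, by omega⟩
    refine ⟨hinj, ?_⟩
    intro i j hij
    fin_cases i <;> fin_cases j <;>
      first
        | exact absurd hij (by decide)
        | exact h01 | exact h01.symm | exact h12 | exact h12.symm
        | exact h23 | exact h23.symm | exact hA | exact hA.symm
  · rintro ⟨hinj, hadj⟩
    have hc : ∀ i : Fin 3, (cycleGraph 4).Adj i.castSucc i.succ := by decide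
    exact ⟨⟨hinj, fun i => hadj _ _ (hc i)⟩, hadj 0 3 (by decide)⟩

lemma B_card (hreg : G.IsRegularOfDegree 3) (c : G.Coloring (Fin 2)) :
    ((pt G 4).filter (fun f => G.Adj (f 1) (f 4))).card = (goodT G (cycleGraph 4)).card := by
  refine Finset.card_bij (fun f _ => fun i : Fin 4 => f i.succ) ?_ ?_ ?_
  · intro f hf
    simp only [Finset.mem_filter, mem_pt] at hf
    obtain ⟨⟨hinj, hadj⟩, hA⟩ := hf
    have h12 : G.Adj (f 1) (f 2) := hadj ⟨1, by omega⟩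
    have h23 : G.Adj (f 2) (f 3) := hadj ⟨2, by omega⟩
    have h34 : G.Adj (f 3) (f 4) := hadj ⟨3, by omega⟩
    simp only [goodT, mem_filter, mem_univ, true_and]
    refine ⟨hinj.comp (Fin.succ_injective _), ?_⟩
    intro i j hij
    fin_cases i <;> fin_cases j <;>
      first
        | exact absurd hij (by decide)
        | exact h12 | exact h12.symm | exact h23 | exact h23.symm
        | exact h34 | exact h34.symm | exact hA | exact hA.symm
  · -- injectivity
    intro f hf f' hf' hc2
    simp only [Finset.mem_filter, mem_pt] at hf hf'
    obtain ⟨⟨hinj, hadj⟩, hA⟩ := hf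
    obtain ⟨⟨hinj', hadj'⟩, hA'⟩ := hf'
    have hsucc : ∀ i : Fin 4, f i.succ = f' i.succ := fun i => congrFun hc2 i
    funext i
    rcases Fin.eq_zero_or_eq_succ i with rfl | ⟨j, rfl⟩
    · -- f 0 and f' 0 are both the third neighbor of f 1
      have h01 : G.Adj (f 0) (f 1) := hadj ⟨0, by omega⟩
      have h01' : G.Adj (f' 0) (f' 1) := hadj' ⟨0, by omega⟩
      have hf1 : f' 1 = f 1 := (hsucc 0).symm
      have h12 : G.Adj (f 1) (f 2) := hadj ⟨1, by omega⟩
      have hN3 : G.neighborFinset (f 1) = {f 0, f 2, f 4} := by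
        refine Finset.eq_of_superset_of_card_ge ?_ ?_
        · intro x hx
          simp only [Finset.mem_insert, Finset.mem_singleton] at hx
          rcases hx with rfl | rfl | rfl
          · exact (mem_neighborFinset _ _ _).mpr h01.symm
          · exact (mem_neighborFinset _ _ _).mpr h12
          · exact (mem_neighborFinset _ _ _).mpr hA
        · rw [card_neighborFinset_eq_degree, hreg]
          refine le_of_eq ?_
          rw [Finset.card_insert_of_notMem ?h1, Finset.card_insert_of_notMem ?h2,
            Finset.card_singleton]
          case h1 =>
            intro hmem
            rcases Finset.mem_insert.mp hmem with hh | hh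
            · exact absurd (hinj hh) (by decide)
            · exact absurd (hinj (Finset.mem_singleton.mp hh)) (by decide)
          case h2 =>
            exact fun hmem => absurd (hinj (Finset.mem_singleton.mp hmem)) (by decide)
      have hf'0 : f' 0 ∈ G.neighborFinset (f 1) := by
        rw [← hf1]
        exact (mem_neighborFinset _ _ _).mpr h01'.symm
      rw [hN3] at hf'0
      simp only [Finset.mem_insert, Finset.mem_singleton] at hf'0
      rcases hf'0 with h | h | h
      · exact h.symm
      · exfalso
        have h2 : f' 2 = f 2 := (hsucc 1).symm
        rw [← h2] at h
        exact absurd (hinj' h) (by decide)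
      · exfalso
        have h4 : f' 4 = f 4 := (hsucc 3).symm
        rw [← h4] at h
        exact absurd (hinj' h) (by decide)
    · exact hsucc j
  · -- surjectivity
    intro g hg
    simp only [goodT, mem_filter, mem_univ, true_and] at hg
    obtain ⟨hinj, hadj⟩ := hg
    have h01 : G.Adj (g 0) (g 1) := hadj 0 1 (by decide)
    have h12 : G.Adj (g 1) (g 2) := hadj 1 2 (by decide)
    have h23 : G.Adj (g 2) (g 3) := hadj 2 3 (by decide)
    have h30 : G.Adj (g 3) (g 0) := hadj 3 0 (by decide)
    -- find the third neighbor of g 0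
    have hsub : {g 1, g 3} ⊆ G.neighborFinset (g 0) := by
      intro x hx
      simp only [Finset.mem_insert, Finset.mem_singleton] at hx
      rcases hx with rfl | rfl
      · exact (mem_neighborFinset _ _ _).mpr h01
      · exact (mem_neighborFinset _ _ _).mpr h30.symm
    have hle : ({g 1, g 3} : Finset V).card ≤ 2 := by
      refine le_trans (Finset.card_insert_le _ _) ?_
      rw [Finset.card_singleton]
    have hne : ({g 1, g 3} : Finset V) ≠ G.neighborFinset (g 0) := by
      intro hh
      have := congrArg Finset.card hh
      rw [card_neighborFinset_eq_degree, hreg] at this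
      omega
    obtain ⟨w, hwN, hwns⟩ := Finset.exists_of_ssubset (hsub.ssubset_of_ne hne)
    simp only [Finset.mem_insert, Finset.mem_singleton, not_or] at hwns
    obtain ⟨hw1, hw3⟩ := hwns
    have hw0adj : G.Adj (g 0) w := (mem_neighborFinset _ _ _).mp hwN
    have hw0 : w ≠ g 0 := fun h => G.irrefl (h ▸ hw0adj)
    have hw2 : w ≠ g 2 := by
      intro hh
      apply c.valid hw0adj
      rw [hh]
      exact color_eq c h01 h12
    refine ⟨Fin.cons w g, ?_, ?_⟩
    · simp only [Finset.mem_filter, mem_pt]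
      refine ⟨⟨?_, ?_⟩, ?_⟩
      · intro a b hab
        rcases Fin.eq_zero_or_eq_succ a with rfl | ⟨a', rfl⟩ <;>
          rcases Fin.eq_zero_or_eq_succ b with rfl | ⟨b', rfl⟩
        · rfl
        · rw [Fin.cons_zero, Fin.cons_succ] at hab
          exfalso
          fin_cases b' <;>
            first | exact hw0 hab | exact hw1 hab | exact hw2 hab | exact hw3 hab
        · rw [Fin.cons_zero, Fin.cons_succ] at hab
          exfalso
          fin_cases a' <;> first
            | exact hw0 hab.symm | exact hw1 hab.symm
            | exact hw2 hab.symm | exact hw3 hab.symm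
        · rw [Fin.cons_succ, Fin.cons_succ] at hab
          exact congrArg Fin.succ (hinj hab)
      · intro i
        fin_cases i
        · exact hw0adj.symm
        · exact h01
        · exact h12
        · exact h23
      · simp only [show (1 : Fin 5) = Fin.succ 0 by decide,
          show (4 : Fin 5) = Fin.succ 3 by decide, Fin.cons_succ]
        exact h30.symm
    · funext i
      simp [Fin.cons_succ]

instance pathGraphAdjDecidable (n : ℕ) : DecidableRel (pathGraph n).Adj :=
  fun _ _ => decidable_of_iff _ pathGraph_adj.symm

lemma pt5_eq : pt G 5 = goodT G (pathGraph 6) := by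
  ext f
  simp only [mem_pt, goodT, mem_filter, mem_univ, true_and]
  constructor
  · rintro ⟨hinj, hadj⟩
    refine ⟨hinj, ?_⟩
    intro i j hij
    rw [pathGraph_adj] at hij
    rcases hij with hij | hij
    · have hlt : (i : ℕ) < 5 := by omega
      have := hadj ⟨(i : ℕ), hlt⟩
      have hci : (⟨(i : ℕ), hlt⟩ : Fin 5).castSucc = i := by
        apply Fin.ext; simp
      have hsi : (⟨(i : ℕ), hlt⟩ : Fin 5).succ = j := by
        apply Fin.ext; simp [hij]
      rwa [hci, hsi] at this
    · have hlt : (j : ℕ) < 5 := by omega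
      have := hadj ⟨(j : ℕ), hlt⟩
      have hci : (⟨(j : ℕ), hlt⟩ : Fin 5).castSucc = j := by
        apply Fin.ext; simp
      have hsi : (⟨(j : ℕ), hlt⟩ : Fin 5).succ = i := by
        apply Fin.ext; simp [hij]
      rw [hci, hsi] at this
      exact this.symm
  · rintro ⟨hinj, hadj⟩
    refine ⟨hinj, ?_⟩
    intro i
    apply hadj
    rw [pathGraph_adj]
    left
    simp

set_option maxRecDepth 20000 in
lemma autSet_pathGraph6 : (autSet (pathGraph 6)).card = 2 := by
  have he : autSet (pathGraph 6) = univ.filter (fun σ : Equiv.Perm (Fin 6) =>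
      ∀ i j : Fin 6, ((i:ℕ) + 1 = (j:ℕ) ∨ (j:ℕ) + 1 = (i:ℕ)) ↔
        ((σ i:ℕ) + 1 = (σ j:ℕ) ∨ (σ j:ℕ) + 1 = (σ i:ℕ))) := by
    apply Finset.filter_congr
    intro σ _
    simp only [pathGraph_adj]
  rw [he]
  decide

set_option maxRecDepth 20000 in
lemma autSet_cycleGraph4 : (autSet (cycleGraph 4)).card = 8 := by
  have he : autSet (cycleGraph 4) = univ.filter (fun σ : Equiv.Perm (Fin 4) =>
      ∀ i j : Fin 4, ((i - j : Fin 4) = 1 ∨ (j - i : Fin 4) = 1) ↔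
        ((σ i - σ j : Fin 4) = 1 ∨ (σ j - σ i : Fin 4) = 1)) := by
    apply Finset.filter_congr
    intro σ _
    simp only [cycleGraph_adj]
  rw [he]
  decide

end Aux

theorem stmt_10 {V : Type*} [Fintype V] [DecidableEq V] (G : SimpleGraph V) [DecidableRel G.Adj]
    (hreg : G.IsRegularOfDegree 3) (hbip : G.Colorable 2) (h : ℕ)
    (hcard : Fintype.card V = 2 * h + 8)
    (hsix : numSubgraphs G (cycleGraph 4) = 6)
    (hshare : ∀ H₁ H₂ : G.Subgraph, Nonempty (H₁.coe ≃g cycleGraph 4) →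
      Nonempty (H₂.coe ≃g cycleGraph 4) → H₁ ≠ H₂ →
      (H₁.edgeSet ∩ H₂.edgeSet).ncard ≤ 1) :
    numSubgraphs G (pathGraph 6) = 48 * h + 120 := by
  obtain ⟨c⟩ := hbip
  have h0 : (pt G 0).card = 2 * h + 8 := by rw [card_pt_zero, hcard]
  have h1 : (pt G 1).card = (pt G 0).card * 3 := by
    rw [card_pt_succ, Finset.sum_congr rfl (fun f hf => card_ptExt0 hreg f hf),
      Finset.sum_const, smul_eq_mul]
  have h2 : (pt G 2).card = (pt G 1).card * 2 := by
    rw [card_pt_succ, Finset.sum_congr rfl (fun f hf => card_ptExt1 hreg f hf),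
      Finset.sum_const, smul_eq_mul]
  have h3 : (pt G 3).card = (pt G 2).card * 2 := by
    rw [card_pt_succ, Finset.sum_congr rfl (fun f hf => card_ptExt2 hreg c f hf),
      Finset.sum_const, smul_eq_mul]
  have hA48 : (goodT G (cycleGraph 4)).card = 48 := by
    rw [card_goodT, autSet_cycleGraph4, hsix]
  have h4 : (pt G 4).card = ((pt G 3).filter (fun f => G.Adj (f 0) (f 3))).card * 1
      + ((pt G 3).filter (fun f => ¬ G.Adj (f 0) (f 3))).card * 2 := by
    rw [card_pt_succ, Finset.sum_congr rfl (fun f hf => card_ptExt3 hreg c f hf),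
      Finset.sum_ite, Finset.sum_const, Finset.sum_const, smul_eq_mul, smul_eq_mul]
  have h4' : ((pt G 3).filter (fun f => G.Adj (f 0) (f 3))).card
      + ((pt G 3).filter (fun f => ¬ G.Adj (f 0) (f 3))).card = (pt G 3).card :=
    Finset.card_filter_add_card_filter_not _
  have h4'' : ((pt G 3).filter (fun f => G.Adj (f 0) (f 3))).card = 48 := by
    rw [A_eq, hA48]
  have h5 : (pt G 5).card = ((pt G 4).filter (fun f => G.Adj (f 1) (f 4))).card * 1
      + ((pt G 4).filter (fun f => ¬ G.Adj (f 1) (f 4))).card * 2 := by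
    rw [card_pt_succ, Finset.sum_congr rfl (fun f hf => card_ptExt4 hreg c f hf),
      Finset.sum_ite, Finset.sum_const, Finset.sum_const, smul_eq_mul, smul_eq_mul]
  have h5' : ((pt G 4).filter (fun f => G.Adj (f 1) (f 4))).card
      + ((pt G 4).filter (fun f => ¬ G.Adj (f 1) (f 4))).card = (pt G 4).card :=
    Finset.card_filter_add_card_filter_not _
  have h5'' : ((pt G 4).filter (fun f => G.Adj (f 1) (f 4))).card = 48 := by
    rw [B_card hreg c, hA48]
  have hfin : (pt G 5).card = 2 * numSubgraphs G (pathGraph 6) := by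
    rw [pt5_eq, card_goodT, autSet_pathGraph6]
  linarith [h0, h1, h2, h3, h4, h4', h4'', h5, h5', h5'', hfin]
end
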